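/- Let G be a triangle-free simple graph on n vertices with at least ⌊(n−1)²/4⌋ edges. Then either (1) G is bipartite, and if G has strictly more than ⌊(n−1)²/4⌋ edges then no two vertices belonging to the same part of the bipartition are remote; or (2) G is non-bipartite, there are at most two (unordered) pairs of remote vertices, and if G has strictly more than ⌊(n−1)²/4⌋ edges then there are no remote pairs at all. -/

import Mathlib

/-- A triple system: a family of 3-element subsets of the vertex type. -/
def isTripleSystem {V : Type*} (F : Finset (Finset V)) : Prop :=
  ∀ t ∈ F, t.card = 3

/-- `F` contains the configuration described by `pattern` (a list of triples on `Fin m`)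
if there is an injection of `Fin m` into the vertex set mapping each triple of the
pattern to a member of `F`. -/
def containsConfig {V : Type*} [DecidableEq V] {m : ℕ}
    (F : Finset (Finset V)) (pattern : List (Finset (Fin m))) : Prop :=
  ∃ f : Fin m → V, Function.Injective f ∧ ∀ t ∈ pattern, t.image f ∈ F

/-- Configuration A: triples {1,2,4},{1,3,5},{2,3,6} on 6 vertices (0-indexed). -/
def configA : List (Finset (Fin 6)) := [{0,1,3}, {0,2,4}, {1,2,5}]

/-- Configuration B: triples {1,2,5},{1,3,4},{2,3,4} on 5 vertices (0-indexed). -/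
def configB : List (Finset (Fin 5)) := [{0,1,4}, {0,2,3}, {1,2,3}]

/-- Configuration C: triples {1,2,4},{1,3,4},{2,3,4} on 4 vertices (0-indexed). -/
def configC : List (Finset (Fin 4)) := [{0,1,3}, {0,2,3}, {1,2,3}]

/-- Configuration D: triples {1,2,3},{1,3,4},{2,3,5} on 5 vertices (0-indexed). -/
def configD : List (Finset (Fin 5)) := [{0,1,2}, {0,2,3}, {1,2,4}]


/-- Two vertices are remote if their distance in G is greater than 2 (in particular,
vertices in different connected components are remote): they are distinct, non-adjacent,
and have no common neighbor. -/
def Remote {V : Type*} (G : SimpleGraph V) (x y : V) : Prop :=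
  x ≠ y ∧ ¬ G.Adj x y ∧ ∀ z : V, ¬ (G.Adj x z ∧ G.Adj z y)

set_option linter.unusedSectionVars false
set_option maxHeartbeats 1000000
open Finset
namespace TFS


/-- floor of m^2/4 -/
def Qf (m : ℕ) : ℕ := m^2/4

lemma Qf_even (t : ℕ) : Qf (2*t) = t*t := by
  unfold Qf
  have h : (2*t)^2 = 4*(t*t) := by ring
  rw [h, Nat.mul_div_cancel_left _ (by norm_num)]

lemma Qf_odd (t : ℕ) : Qf (2*t+1) = t*t+t := by
  unfold Qf
  have h : (2*t+1)^2 = 4*(t*t+t) + 1 := by ring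
  rw [h]
  omega

lemma Qf_step (m : ℕ) : Qf (m+1) = Qf m + (m+1)/2 := by
  rcases Nat.even_or_odd m with ⟨t, ht⟩ | ⟨t, ht⟩
  · have hm : m = 2*t := by omega
    subst hm
    rw [Qf_even, show 2*t+1 = 2*t+1 from rfl, Qf_odd]
    omega
  · subst ht
    rw [show 2*t+1+1 = 2*(t+1) from by ring, Qf_even, Qf_odd]
    have : (t+1)*(t+1) = t*t+t + (t+1) := by ring
    omega

lemma Qf_step2 (m : ℕ) : Qf (m+2) = Qf m + (m+1) := by
  rw [show m+2 = (m+1)+1 from rfl, Qf_step, Qf_step]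
  omega

lemma Qf_mono : Monotone Qf := by
  intro a b hab
  exact Nat.div_le_div_right (Nat.pow_le_pow_left hab 2)

lemma Qf_ab (a b : ℕ) : a*b ≤ Qf (a+b) := by
  have h4 : 4*(a*b) ≤ (a+b)^2 := by nlinarith [two_mul_le_add_sq a b]
  have : a*b = 4*(a*b)/4 := by omega
  rw [this]
  exact Nat.div_le_div_right h4

lemma Qf_bal_aux (a b : ℕ) (h : b + 2 ≤ a) : a*b < Qf (a+b) := by
  obtain ⟨c, rfl⟩ : ∃ c, a = b + 2 + c := ⟨a - (b+2), by omega⟩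
  have h4 : 4*((b+2+c)*b) + 4 ≤ (b+2+c+b)^2 := by nlinarith
  have : (b+2+c)*b + 1 ≤ Qf (b+2+c+b) := by
    unfold Qf
    rw [Nat.le_div_iff_mul_le (by norm_num)]
    omega
  omega

lemma Qf_bal (a b : ℕ) (h : a*b = Qf (a+b)) : a ≤ b+1 ∧ b ≤ a+1 := by
  constructor
  · by_contra hc
    have := Qf_bal_aux a b (by omega)
    omega
  · by_contra hc
    have := Qf_bal_aux b a (by omega)
    rw [mul_comm, add_comm] at this
    omega


lemma pr_bound {p r : ℕ} (hp : 1 ≤ p) (hr : 1 ≤ r) : p + r ≤ p * r + 1 := by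
  obtain ⟨p0, rfl⟩ := Nat.exists_eq_add_of_le hp
  obtain ⟨r0, rfl⟩ := Nat.exists_eq_add_of_le hr
  nlinarith [Nat.zero_le (p0*r0)]

variable {V : Type*} [Fintype V] [DecidableEq V] {G : SimpleGraph V} [DecidableRel G.Adj]

def nb (G : SimpleGraph V) [DecidableRel G.Adj] (s : Finset V) (v : V) : Finset V := s.filter (fun u => G.Adj v u)
def dIn (G : SimpleGraph V) [DecidableRel G.Adj] (s : Finset V) (v : V) : ℕ := (nb G s v).card
def E2 (G : SimpleGraph V) [DecidableRel G.Adj] (s : Finset V) : ℕ := ((s ×ˢ s).filter (fun p => G.Adj p.1 p.2)).card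
def PCol (G : SimpleGraph V) (s : Finset V) (P : Set V) : Prop :=
  ∀ x ∈ s, ∀ y ∈ s, G.Adj x y → (x ∈ P ↔ y ∉ P)
def BipOn (G : SimpleGraph V) (s : Finset V) : Prop := ∃ P : Set V, PCol G s P
noncomputable def colA (s : Finset V) (P : Set V) : Finset V :=
  @filter _ (fun u => u ∈ P) (Classical.decPred _) s
noncomputable def colB (s : Finset V) (P : Set V) : Finset V :=
  @filter _ (fun u => u ∉ P) (Classical.decPred _) s
lemma mem_nb {s : Finset V} {v u : V} : u ∈ nb G s v ↔ u ∈ s ∧ G.Adj v u := by simp [nb]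
lemma mem_colA {s : Finset V} {P : Set V} {u : V} : u ∈ colA s P ↔ u ∈ s ∧ u ∈ P := by simp [colA]
lemma mem_colB {s : Finset V} {P : Set V} {u : V} : u ∈ colB s P ↔ u ∈ s ∧ u ∉ P := by simp [colB]
lemma nb_subset {s : Finset V} {v : V} : nb G s v ⊆ s := filter_subset _ _
lemma dIn_mono {s t : Finset V} (h : s ⊆ t) (v : V) : dIn G s v ≤ dIn G t v :=
  card_le_card (filter_subset_filter _ h)


lemma colA_union_colB (s : Finset V) (P : Set V) : colA s P ∪ colB s P = s := by
  ext u; simp only [Finset.mem_union, mem_colA, mem_colB]; tauto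

lemma colA_disj_colB (s : Finset V) (P : Set V) : Disjoint (colA s P) (colB s P) := by
  rw [Finset.disjoint_left]
  intro u hu hu'
  rw [mem_colA] at hu; rw [mem_colB] at hu'
  exact hu'.2 hu.2

lemma colA_card_add_colB_card (s : Finset V) (P : Set V) :
    (colA s P).card + (colB s P).card = s.card := by
  rw [← card_union_of_disjoint (colA_disj_colB s P), colA_union_colB]

lemma E2_eq_sum (s : Finset V) : E2 G s = ∑ u ∈ s, dIn G s u := by
  unfold E2 dIn nb
  rw [card_filter, sum_product]
  exact sum_congr rfl fun u _ => (card_filter _ _).symm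

lemma nb_erase_self (s : Finset V) (v : V) : nb G (s.erase v) v = nb G s v := by
  ext u
  simp only [mem_nb, mem_erase]
  constructor
  · rintro ⟨⟨_, hu⟩, ha⟩; exact ⟨hu, ha⟩
  · rintro ⟨hu, ha⟩; exact ⟨⟨ha.ne', hu⟩, ha⟩

lemma nb_erase_not_adj {s : Finset V} {v u : V} (h : ¬ G.Adj v u) :
    nb G (s.erase u) v = nb G s v := by
  ext w
  simp only [mem_nb, mem_erase]
  constructor
  · rintro ⟨⟨_, hw⟩, ha⟩; exact ⟨hw, ha⟩
  · rintro ⟨hw, ha⟩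
    refine ⟨⟨?_, hw⟩, ha⟩
    rintro rfl; exact h ha

/-- one-vertex deletion formula -/
lemma E2_erase {s : Finset V} {v : V} (hv : v ∈ s) :
    E2 G s = E2 G (s.erase v) + 2 * dIn G (s.erase v) v := by
  have key : ∀ u ∈ s.erase v, dIn G s u = dIn G (s.erase v) u + (if G.Adj u v then 1 else 0) := by
    intro u hu
    unfold dIn nb
    have hs : s = insert v (s.erase v) := (insert_erase hv).symm
    rw [hs, filter_insert]
    by_cases ha : G.Adj u v
    · rw [if_pos ha, card_insert_of_notMem (by simp)]
      simp [ha]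
    · rw [if_neg ha]
      simp [ha]
  rw [E2_eq_sum, E2_eq_sum, ← Finset.sum_erase_add s _ hv]
  have h1 : ∑ u ∈ s.erase v, dIn G s u
      = (∑ u ∈ s.erase v, dIn G (s.erase v) u) + dIn G (s.erase v) v := by
    rw [Finset.sum_congr rfl key, Finset.sum_add_distrib]
    congr 1
    unfold dIn nb
    rw [card_filter]
    exact Finset.sum_congr rfl fun u _ => by simp only [G.adj_comm]
  have h2 : dIn G s v = dIn G (s.erase v) v := by
    unfold dIn; rw [nb_erase_self]
  rw [h1, h2]
  ring

/-- two-vertex deletion formula -/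
lemma E2_erase2 {s : Finset V} {x y : V} (hx : x ∈ s) (hy : y ∈ s) (hxy : x ≠ y)
    (hnadj : ¬ G.Adj x y) :
    E2 G s = E2 G ((s.erase x).erase y) + 2 * dIn G s x + 2 * dIn G s y := by
  have h1 : E2 G s = E2 G (s.erase x) + 2 * dIn G (s.erase x) x := E2_erase hx
  have h2 : E2 G (s.erase x) = E2 G ((s.erase x).erase y) + 2 * dIn G ((s.erase x).erase y) y :=
    E2_erase (Finset.mem_erase.mpr ⟨hxy.symm, hy⟩)
  have h3 : dIn G (s.erase x) x = dIn G s x := by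
    unfold dIn; rw [nb_erase_self]
  have h4 : dIn G ((s.erase x).erase y) y = dIn G s y := by
    unfold dIn
    rw [nb_erase_self, nb_erase_not_adj (fun h => hnadj h.symm)]
  omega

lemma tri_free (hTF : G.CliqueFree 3) :
    ∀ a b c : V, G.Adj a b → G.Adj a c → G.Adj b c → False := fun a b c hab hac hbc =>
  hTF {a,b,c} (SimpleGraph.is3Clique_triple_iff.mpr ⟨hab, hac, hbc⟩)

lemma nb_disj_of_adj (hTF : G.CliqueFree 3) {s : Finset V} {u v : V} (h : G.Adj u v) :
    Disjoint (nb G s u) (nb G s v) := by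
  rw [Finset.disjoint_left]
  intro z hz hz'
  rw [mem_nb] at hz hz'
  exact tri_free hTF u v z h hz.2 hz'.2

lemma nb_disj_of_nocommon (hc : ∀ z : V, ¬ (G.Adj x z ∧ G.Adj z y)) (s : Finset V) :
    Disjoint (nb G s x) (nb G s y) := by
  rw [Finset.disjoint_left]
  intro z hz hz'
  rw [mem_nb] at hz hz'
  exact hc z ⟨hz.2, hz'.2.symm⟩

lemma exists_edge {s : Finset V} (h : ¬ BipOn G s) : ∃ u ∈ s, ∃ v ∈ s, G.Adj u v := by
  by_contra hc
  push_neg at hc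
  exact h ⟨∅, fun u hu v hv ha => absurd ha (hc u hu v hv)⟩

/-- the coloring bound: edges within s avoid M -/
lemma E2_col {s : Finset V} {P : Set V} (hP : PCol G s P) (M : Finset (V × V))
    (hM : M ⊆ (colA s P) ×ˢ (colB s P)) (hMadj : ∀ p ∈ M, ¬ G.Adj p.1 p.2) :
    E2 G s + 2 * M.card ≤ 2 * ((colA s P).card * (colB s P).card) := by
  classical
  set F : Finset (V × V) := (s ×ˢ s).filter (fun p => G.Adj p.1 p.2) with hF
  set F1 : Finset (V × V) := F.filter (fun p => p.1 ∈ P) with hF1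
  set F2 : Finset (V × V) := F.filter (fun p => ¬ p.1 ∈ P) with hF2
  have memF : ∀ p : V × V, p ∈ F ↔ (p.1 ∈ s ∧ p.2 ∈ s ∧ G.Adj p.1 p.2) := by
    intro p; simp [hF, Finset.mem_product]; tauto
  have hsplit : F1.card + F2.card = F.card := card_filter_add_card_filter_not _
  have hswap : F1.card = F2.card := by
    apply Finset.card_bij' (fun p _ => Prod.swap p) (fun p _ => Prod.swap p)
    · intro p hp
      simp only [hF1, mem_filter] at hp
      have hm := (memF p).mp hp.1
      simp only [hF2, mem_filter]
      refine ⟨(memF _).mpr ⟨hm.2.1, hm.1, hm.2.2.symm⟩, ?_⟩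
      intro hP2
      exact ((hP p.1 hm.1 p.2 hm.2.1 hm.2.2).mp hp.2) hP2
    · intro p hp
      simp only [hF2, mem_filter] at hp
      have hm := (memF p).mp hp.1
      simp only [hF1, mem_filter]
      refine ⟨(memF _).mpr ⟨hm.2.1, hm.1, hm.2.2.symm⟩, ?_⟩
      by_contra hP2
      exact hp.2 ((hP p.1 hm.1 p.2 hm.2.1 hm.2.2).mpr hP2)
    · intro p _; rfl
    · intro p _; rfl
  have hdisj : Disjoint F1 M := by
    rw [Finset.disjoint_left]
    intro p hp hpM
    simp only [hF1, mem_filter] at hp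
    exact hMadj p hpM ((memF p).mp hp.1).2.2
  have hsub : F1 ∪ M ⊆ (colA s P) ×ˢ (colB s P) := by
    apply union_subset _ hM
    intro p hp
    simp only [hF1, mem_filter] at hp
    have hm := (memF p).mp hp.1
    rw [Finset.mem_product]
    exact ⟨mem_colA.mpr ⟨hm.1, hp.2⟩,
      mem_colB.mpr ⟨hm.2.1, (hP p.1 hm.1 p.2 hm.2.1 hm.2.2).mp hp.2⟩⟩
  have hcard : F1.card + M.card ≤ (colA s P).card * (colB s P).card := by
    rw [← card_union_of_disjoint hdisj]
    calc (F1 ∪ M).card ≤ ((colA s P) ×ˢ (colB s P)).card := card_le_card hsub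
      _ = _ := card_product _ _
  have hE : E2 G s = F.card := rfl
  omega

/-- minimum degree lemma -/
lemma min_deg (hTF : G.CliqueFree 3) {s : Finset V} (h : ¬ BipOn G s) :
    ∃ v ∈ s, dIn G s v ≤ (s.card - 1)/2 := by
  by_contra hc
  push_neg at hc
  obtain ⟨u, hu, v, hv, hadj⟩ := exists_edge h
  have hdisj := nb_disj_of_adj hTF (s := s) hadj
  have hsum : dIn G s u + dIn G s v ≤ s.card := by
    rw [dIn, dIn, ← card_union_of_disjoint hdisj]
    exact card_le_card (union_subset nb_subset nb_subset)
  have hu' := hc u hu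
  have hv' := hc v hv
  have hcardeq : (nb G s u).card + (nb G s v).card = s.card := by
    have h1 : dIn G s u = (nb G s u).card := rfl
    have h2 : dIn G s v = (nb G s v).card := rfl
    omega
  have huni : nb G s u ∪ nb G s v = s := by
    apply eq_of_subset_of_card_le (union_subset nb_subset nb_subset)
    rw [card_union_of_disjoint hdisj]
    omega
  apply h
  refine ⟨↑(nb G s u), ?_⟩
  intro a ha b hb hab
  have ha' : a ∈ nb G s u ∨ a ∈ nb G s v := by
    rw [← Finset.mem_union, huni]; exact ha
  have hb' : b ∈ nb G s u ∨ b ∈ nb G s v := by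
    rw [← Finset.mem_union, huni]; exact hb
  simp only [Finset.coe_sort_coe, Finset.mem_coe]
  rcases ha' with h1 | h1 <;> rcases hb' with h2 | h2
  · exact absurd hab (fun hab => tri_free hTF u a b (mem_nb.mp h1).2 (mem_nb.mp h2).2 hab)
  · constructor
    · intro _ hbu
      exact (Finset.disjoint_left.mp hdisj) hbu h2
    · intro _; exact h1
  · constructor
    · intro hau; exact absurd hau (Finset.disjoint_left.mp hdisj.symm h1)
    · intro hb2; exact absurd h2 hb2
  · exact absurd hab (fun hab => tri_free hTF v a b (mem_nb.mp h1).2 (mem_nb.mp h2).2 hab)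

/-- extension of a coloring over one vertex, negative form -/
lemma extend1 {s : Finset V} {v : V} (hnb : ¬ BipOn G s) (hv : v ∈ s) {P : Set V}
    (hP : PCol G (s.erase v) P) :
    ∃ a ∈ s.erase v, ∃ b ∈ s.erase v, G.Adj v a ∧ G.Adj v b ∧ a ∈ P ∧ b ∉ P := by
  by_cases h1 : ∀ w ∈ s.erase v, G.Adj v w → w ∈ P
  · exfalso
    apply hnb
    refine ⟨{w | w ≠ v ∧ w ∈ P}, ?_⟩
    intro a ha b hb hab
    simp only [Set.mem_setOf_eq]
    by_cases hav : a = v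
    · have hbv : b ≠ v := fun h => hab.ne (hav.trans h.symm)
      have hab' : G.Adj v b := by rwa [hav] at hab
      have hbP : b ∈ P := h1 b (mem_erase.mpr ⟨hbv, hb⟩) hab'
      simp [hav, hbv, hbP]
    · by_cases hbv : b = v
      · have hab' : G.Adj v a := by rw [hbv] at hab; exact hab.symm
        have haP : a ∈ P := h1 a (mem_erase.mpr ⟨hav, ha⟩) hab'
        simp [hav, hbv, haP]
      · have hiff := hP a (mem_erase.mpr ⟨hav, ha⟩) b (mem_erase.mpr ⟨hbv, hb⟩) hab
        simp only [hav, hbv, ne_eq, not_false_iff, true_and]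
        tauto
  · by_cases h2 : ∀ w ∈ s.erase v, G.Adj v w → w ∉ P
    · exfalso
      apply hnb
      refine ⟨{w | w = v ∨ w ∈ P}, ?_⟩
      intro a ha b hb hab
      simp only [Set.mem_setOf_eq]
      by_cases hav : a = v
      · have hbv : b ≠ v := fun h => hab.ne (hav.trans h.symm)
        have hab' : G.Adj v b := by rwa [hav] at hab
        have hbP : b ∉ P := h2 b (mem_erase.mpr ⟨hbv, hb⟩) hab'
        simp [hav, hbv, hbP]
      · by_cases hbv : b = v
        · have hab' : G.Adj v a := by rw [hbv] at hab; exact hab.symm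
          have haP : a ∉ P := h2 a (mem_erase.mpr ⟨hav, ha⟩) hab'
          simp [hav, hbv, haP]
        · have hiff := hP a (mem_erase.mpr ⟨hav, ha⟩) b (mem_erase.mpr ⟨hbv, hb⟩) hab
          simp only [hav, hbv, false_or]
          tauto
    · push_neg at h1 h2
      obtain ⟨b, hb, hab, hbP⟩ := h1
      obtain ⟨a, ha, haa, haP⟩ := h2
      exact ⟨a, ha, b, hb, haa, hab, haP, hbP⟩

/-- extension of a coloring over two nonadjacent vertices, negative form -/
lemma extend2 {s : Finset V} {x y : V} (hnb : ¬ BipOn G s) (hx : x ∈ s) (hy : y ∈ s)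
    (hxy : x ≠ y) (hnadj : ¬ G.Adj x y) {P : Set V} (hP : PCol G ((s.erase x).erase y) P) :
    (∃ a ∈ (s.erase x).erase y, ∃ b ∈ (s.erase x).erase y,
      G.Adj x a ∧ G.Adj x b ∧ a ∈ P ∧ b ∉ P) ∨
    (∃ a ∈ (s.erase x).erase y, ∃ b ∈ (s.erase x).erase y,
      G.Adj y a ∧ G.Adj y b ∧ a ∈ P ∧ b ∉ P) := by
  set e := (s.erase x).erase y with he
  have heme : ∀ w, w ∈ e ↔ (w ≠ x ∧ w ≠ y ∧ w ∈ s) := by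
    intro w
    simp only [he, mem_erase]
    tauto
  by_cases hx1 : (∀ w ∈ e, G.Adj x w → w ∈ P) ∨ (∀ w ∈ e, G.Adj x w → w ∉ P)
  · by_cases hy1 : (∀ w ∈ e, G.Adj y w → w ∈ P) ∨ (∀ w ∈ e, G.Adj y w → w ∉ P)
    · exfalso
      apply hnb
      set px : Prop := ∀ w ∈ e, G.Adj x w → w ∉ P with hpx
      set py : Prop := ∀ w ∈ e, G.Adj y w → w ∉ P with hpy
      refine ⟨{w | (w = x ∧ px) ∨ (w = y ∧ py) ∨ (w ≠ x ∧ w ≠ y ∧ w ∈ P)}, ?_⟩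
      intro a ha b hb hab
      simp only [Set.mem_setOf_eq]
      have hne : a ≠ b := hab.ne
      by_cases hax : a = x
      · have hby : b ≠ y := by
          intro h; rw [hax, h] at hab; exact hnadj hab
        have hbx : b ≠ x := fun h => hne (hax.trans h.symm)
        have hbe : b ∈ e := (heme b).mpr ⟨hbx, hby, hb⟩
        have hadj : G.Adj x b := by rwa [hax] at hab
        by_cases hpx' : px
        · have hbP : b ∉ P := hpx' b hbe hadj
          simp [hax, hxy, hbx, hby, hbP]
          tauto
        · have hallin : ∀ w ∈ e, G.Adj x w → w ∈ P := by tauto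
          have hbP : b ∈ P := hallin b hbe hadj
          simp [hax, hxy, hbx, hby, hbP]
          tauto
      · by_cases hbxx : b = x
        · have hay : a ≠ y := by
            intro h; rw [hbxx, h] at hab; exact hnadj hab.symm
          have hae : a ∈ e := (heme a).mpr ⟨hax, hay, ha⟩
          have hadj : G.Adj x a := by rw [hbxx] at hab; exact hab.symm
          by_cases hpx' : px
          · have haP : a ∉ P := hpx' a hae hadj
            simp [hbxx, hxy, hax, hay, haP]
            tauto
          · have hallin : ∀ w ∈ e, G.Adj x w → w ∈ P := by tauto
            have haP : a ∈ P := hallin a hae hadj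
            simp [hbxx, hxy, hax, hay, haP]
            tauto
        · by_cases hay : a = y
          · have hby : b ≠ y := fun h => hne (hay.trans h.symm)
            have hbe : b ∈ e := (heme b).mpr ⟨hbxx, hby, hb⟩
            have hadj : G.Adj y b := by rwa [hay] at hab
            by_cases hpy' : py
            · have hbP : b ∉ P := hpy' b hbe hadj
              simp [hay, hxy.symm, hbxx, hby, hbP]
              tauto
            · have hallin : ∀ w ∈ e, G.Adj y w → w ∈ P := by tauto
              have hbP : b ∈ P := hallin b hbe hadj
              simp [hay, hxy.symm, hbxx, hby, hbP]
              tauto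
          · by_cases hbyy : b = y
            · have hae : a ∈ e := (heme a).mpr ⟨hax, hay, ha⟩
              have hadj : G.Adj y a := by rw [hbyy] at hab; exact hab.symm
              by_cases hpy' : py
              · have haP : a ∉ P := hpy' a hae hadj
                simp [hbyy, hxy.symm, hax, hay, haP]
                tauto
              · have hallin : ∀ w ∈ e, G.Adj y w → w ∈ P := by tauto
                have haP : a ∈ P := hallin a hae hadj
                simp [hbyy, hxy.symm, hax, hay, haP]
                tauto
            · have hae : a ∈ e := (heme a).mpr ⟨hax, hay, ha⟩
              have hbe : b ∈ e := (heme b).mpr ⟨hbxx, hbyy, hb⟩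
              have hiff := hP a hae b hbe hab
              simp only [hax, hay, hbxx, hbyy, ne_eq, not_false_iff, true_and, false_and,
                false_or]
              tauto
    · push_neg at hy1
      obtain ⟨⟨b, hb, hab, hbP⟩, ⟨a, ha, haa, haP⟩⟩ := hy1
      exact Or.inr ⟨a, ha, b, hb, haa, hab, haP, hbP⟩
  · push_neg at hx1
    obtain ⟨⟨b, hb, hab, hbP⟩, ⟨a, ha, haa, haP⟩⟩ := hx1
    exact Or.inl ⟨a, ha, b, hb, haa, hab, haP, hbP⟩

lemma bip_small (hTF : G.CliqueFree 3) : ∀ s : Finset V, s.card ≤ 4 → BipOn G s := by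
  intro s
  induction s using Finset.strongInduction with
  | _ s ih =>
    intro hcard
    by_contra hnb
    obtain ⟨v, hv, hd⟩ := min_deg hTF hnb
    have hsub : s.erase v ⊂ s := erase_ssubset hv
    have hbip : BipOn G (s.erase v) := ih _ hsub (le_trans (card_le_card hsub.subset) hcard)
    obtain ⟨P, hP⟩ := hbip
    obtain ⟨a, ha, b, hb, hva, hvb, haP, hbP⟩ := extend1 hnb hv hP
    have hab : a ≠ b := fun h => hbP (h ▸ haP)
    have h2 : 2 ≤ dIn G (s.erase v) v := by
      have hsubnb : {a, b} ⊆ nb G (s.erase v) v := by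
        intro w hw
        rcases mem_insert.mp hw with rfl | hw
        · exact mem_nb.mpr ⟨ha, hva⟩
        · rw [mem_singleton] at hw; subst hw; exact mem_nb.mpr ⟨hb, hvb⟩
      calc 2 = ({a,b} : Finset V).card := (card_pair hab).symm
        _ ≤ _ := card_le_card hsubnb
    have h3 : dIn G (s.erase v) v ≤ dIn G s v := dIn_mono (erase_subset _ _) v
    omega

lemma nonbip_card5 {s : Finset V} (hTF : G.CliqueFree 3) (hnb : ¬ BipOn G s) : 5 ≤ s.card := by
  by_contra h
  exact hnb (bip_small hTF s (by omega))

theorem thmA (hTF : G.CliqueFree 3) :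
    ∀ s : Finset V, ¬ BipOn G s → E2 G s ≤ 2 * (Qf (s.card - 1) + 1) := by
  intro s
  induction s using Finset.strongInduction with
  | _ s ih =>
    intro hnb
    obtain ⟨v, hv, hd⟩ := min_deg hTF hnb
    have hc5 : 5 ≤ s.card := nonbip_card5 hTF hnb
    have hcard' : (s.erase v).card = s.card - 1 := card_erase_of_mem hv
    have hE : E2 G s = E2 G (s.erase v) + 2 * dIn G (s.erase v) v := E2_erase hv
    by_cases hb : BipOn G (s.erase v)
    · obtain ⟨P, hP⟩ := hb
      obtain ⟨a, ha, b, hb', hva, hvb, haP, hbP⟩ := extend1 hnb hv hP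
      set s' := s.erase v with hs'
      set A := colA s' P with hA
      set B := colB s' P with hB
      set M := (nb G s' v ∩ A) ×ˢ (nb G s' v ∩ B) with hM
      have hMsub : M ⊆ A ×ˢ B := product_subset_product inter_subset_right inter_subset_right
      have hMadj : ∀ p ∈ M, ¬ G.Adj p.1 p.2 := by
        intro q hq hadj
        rw [hM, Finset.mem_product] at hq
        exact tri_free hTF v q.1 q.2 (mem_nb.mp (mem_inter.mp hq.1).1).2
          (mem_nb.mp (mem_inter.mp hq.2).1).2 hadj
      have hcol := E2_col hP M hMsub hMadj
      have hMcard : M.card = (nb G s' v ∩ A).card * (nb G s' v ∩ B).card := card_product _ _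
      set p := (nb G s' v ∩ A).card with hpdef
      set r := (nb G s' v ∩ B).card with hrdef
      have hp1 : 1 ≤ p := card_pos.mpr
        ⟨a, mem_inter.mpr ⟨mem_nb.mpr ⟨ha, hva⟩, mem_colA.mpr ⟨ha, haP⟩⟩⟩
      have hr1 : 1 ≤ r := card_pos.mpr
        ⟨b, mem_inter.mpr ⟨mem_nb.mpr ⟨hb', hvb⟩, mem_colB.mpr ⟨hb', hbP⟩⟩⟩
      have hdsplit : dIn G s' v = p + r := by
        unfold dIn
        rw [hpdef, hrdef, ← card_union_of_disjoint
          ((colA_disj_colB s' P).mono inter_subset_right inter_subset_right)]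
        congr 1
        rw [← Finset.inter_union_distrib_left, colA_union_colB,
          Finset.inter_eq_left.mpr nb_subset]
      have hprle : p + r ≤ p * r + 1 := pr_bound hp1 hr1
      have hABcard : A.card + B.card = s'.card := colA_card_add_colB_card s' P
      have habQ : A.card * B.card ≤ Qf (s.card - 1) := by
        have h := Qf_ab A.card B.card
        rwa [hABcard, hcard'] at h
      set pr := p * r with hpr
      set AB := A.card * B.card with hAB
      set Q1 := Qf (s.card - 1) with hQ1
      omega
    · have hIH := ih (s.erase v) (erase_ssubset hv) hb
      have hd' : dIn G (s.erase v) v ≤ (s.card - 1)/2 :=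
        le_trans (dIn_mono (erase_subset _ _) v) hd
      obtain ⟨k, hk⟩ : ∃ k, s.card = k + 2 := ⟨s.card - 2, by omega⟩
      have hstep : Qf (k+1) = Qf k + (k+1)/2 := Qf_step k
      have he1 : (s.erase v).card - 1 = k := by omega
      rw [he1] at hIH
      have hg : s.card - 1 = k + 1 := by omega
      rw [hg] at hd' ⊢
      rw [hstep]
      set Qk := Qf k with hQk
      omega

/-- if the neighborhoods of a remote pair cover everything else, the graph is bipartite -/
lemma partition_bip (hTF : G.CliqueFree 3) {s : Finset V} {x y : V} (hx : x ∈ s) (hy : y ∈ s)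
    (hxy : x ≠ y) (hnadj : ¬ G.Adj x y) (hnoz : ∀ z ∈ s, ¬ (G.Adj x z ∧ G.Adj z y))
    (hcover : ∀ w ∈ (s.erase x).erase y, w ∈ nb G s x ∨ w ∈ nb G s y) : BipOn G s := by
  have hdisj : Disjoint (nb G s x) (nb G s y) := by
    rw [Finset.disjoint_left]
    intro z hz hz'
    exact hnoz z (mem_nb.mp hz).1 ⟨(mem_nb.mp hz).2, (mem_nb.mp hz').2.symm⟩
  refine ⟨{w | w ∈ nb G s x ∨ w = y}, ?_⟩
  intro a ha b hb hab
  simp only [Set.mem_setOf_eq]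
  have hnxx : x ∉ nb G s x := fun h => G.irrefl (mem_nb.mp h).2
  have hnyx : y ∉ nb G s x := fun h => hnadj (mem_nb.mp h).2
  by_cases hax : a = x
  · have hbnx : b ∈ nb G s x := mem_nb.mpr ⟨hb, by rwa [hax] at hab⟩
    have hby : b ≠ y := fun h => hnadj (by rw [hax, h] at hab; exact hab)
    simp [hax, hnxx, hxy, hbnx]
  · by_cases hbx : b = x
    · have hanx : a ∈ nb G s x := mem_nb.mpr ⟨ha, by rw [hbx] at hab; exact hab.symm⟩
      have hay : a ≠ y := fun h => hnadj (by rw [hbx, h] at hab; exact hab.symm)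
      simp [hbx, hnxx, hxy, hanx]
    · by_cases hay : a = y
      · have hbny : b ∈ nb G s y := mem_nb.mpr ⟨hb, by rwa [hay] at hab⟩
        have hbnx : b ∉ nb G s x := Finset.disjoint_right.mp hdisj hbny
        have hby : b ≠ y := fun h => G.irrefl (by rw [hay, h] at hab; exact hab)
        simp [hay, hbnx, hby]
      · by_cases hby : b = y
        · have hany : a ∈ nb G s y := mem_nb.mpr ⟨ha, by rw [hby] at hab; exact hab.symm⟩
          have hanx : a ∉ nb G s x := Finset.disjoint_right.mp hdisj hany
          simp [hby, hanx, hay]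
        · have hac := hcover a (mem_erase.mpr ⟨hay, mem_erase.mpr ⟨hax, ha⟩⟩)
          have hbc := hcover b (mem_erase.mpr ⟨hby, mem_erase.mpr ⟨hbx, hb⟩⟩)
          rcases hac with h1 | h1 <;> rcases hbc with h2 | h2
          · exact absurd hab (fun hab =>
              tri_free hTF x a b (mem_nb.mp h1).2 (mem_nb.mp h2).2 hab)
          · have hbnx : b ∉ nb G s x := Finset.disjoint_right.mp hdisj h2
            simp [h1, hbnx, hby]
          · have hanx : a ∉ nb G s x := Finset.disjoint_right.mp hdisj h1
            simp [hanx, hay, h2]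
          · exact absurd hab (fun hab =>
              tri_free hTF y a b (mem_nb.mp h1).2 (mem_nb.mp h2).2 hab)

/-- neighborhood of x in s equals neighborhood in s minus the remote pair -/
lemma nb_erase2_x {s : Finset V} {x y : V} (hnadj : ¬ G.Adj x y) :
    nb G ((s.erase x).erase y) x = nb G s x := by
  rw [nb_erase_not_adj hnadj, nb_erase_self]

lemma nb_erase2_y {s : Finset V} {x y : V} (hnadj : ¬ G.Adj x y) :
    nb G ((s.erase x).erase y) y = nb G s y := by
  rw [nb_erase_self, nb_erase_not_adj (fun h => hnadj h.symm)]

/-- core of theorem B, case where the deleted pair leaves a bipartite graph and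
x sees both sides -/
lemma thmB_core (hTF : G.CliqueFree 3) {s : Finset V} (hnb : ¬ BipOn G s) {x y : V}
    (hx : x ∈ s) (hy : y ∈ s) (hxy : x ≠ y) (hnadj : ¬ G.Adj x y)
    (hnoz : ∀ z ∈ s, ¬ (G.Adj x z ∧ G.Adj z y)) {P : Set V}
    (hP : PCol G ((s.erase x).erase y) P)
    (hpx : ∃ a ∈ (s.erase x).erase y, G.Adj x a ∧ a ∈ P)
    (hrx : ∃ b ∈ (s.erase x).erase y, G.Adj x b ∧ b ∉ P) :
    E2 G s ≤ 2 * Qf (s.card - 1) := by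
  classical
  have hc5 : 5 ≤ s.card := nonbip_card5 hTF hnb
  set s' := (s.erase x).erase y with hs'
  have hys' : y ∉ s' := notMem_erase _ _
  have hxs' : x ∉ s' := fun h => absurd (mem_erase.mp h).2 (notMem_erase x s)
  have hcard' : s'.card = s.card - 2 := by
    rw [hs', card_erase_of_mem (mem_erase.mpr ⟨hxy.symm, hy⟩), card_erase_of_mem hx]
    omega
  set A := colA s' P with hA
  set B := colB s' P with hB
  set NX := nb G s' x with hNX
  set NY := nb G s' y with hNY
  have hNXs : NX = nb G s x := nb_erase2_x hnadj
  have hNYs : NY = nb G s y := nb_erase2_y hnadj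
  have hdisjXY : Disjoint NX NY := by
    rw [hNXs, hNYs, Finset.disjoint_left]
    intro z hz hz'
    exact hnoz z (mem_nb.mp hz).1 ⟨(mem_nb.mp hz).2, (mem_nb.mp hz').2.symm⟩
  set M := (NX ∩ A) ×ˢ (NX ∩ B) ∪ (NY ∩ A) ×ˢ (NY ∩ B) with hM
  have hMsub : M ⊆ A ×ˢ B :=
    union_subset (product_subset_product inter_subset_right inter_subset_right)
      (product_subset_product inter_subset_right inter_subset_right)
  have hMadj : ∀ q ∈ M, ¬ G.Adj q.1 q.2 := by
    intro q hq hadj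
    rcases Finset.mem_union.mp hq with h | h
    · rw [Finset.mem_product] at h
      exact tri_free hTF x q.1 q.2 (mem_nb.mp (mem_inter.mp h.1).1).2
        (mem_nb.mp (mem_inter.mp h.2).1).2 hadj
    · rw [Finset.mem_product] at h
      exact tri_free hTF y q.1 q.2 (mem_nb.mp (mem_inter.mp h.1).1).2
        (mem_nb.mp (mem_inter.mp h.2).1).2 hadj
  have hMdisj : Disjoint ((NX ∩ A) ×ˢ (NX ∩ B)) ((NY ∩ A) ×ˢ (NY ∩ B)) := by
    rw [Finset.disjoint_left]
    intro q hq hq'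
    rw [Finset.mem_product] at hq hq'
    exact Finset.disjoint_left.mp hdisjXY (mem_inter.mp hq.1).1 (mem_inter.mp hq'.1).1
  have hMcard : M.card = (NX ∩ A).card * (NX ∩ B).card + (NY ∩ A).card * (NY ∩ B).card := by
    rw [hM, card_union_of_disjoint hMdisj, card_product, card_product]
  set p := (NX ∩ A).card with hp
  set r := (NX ∩ B).card with hr
  set py := (NY ∩ A).card with hpy
  set ry := (NY ∩ B).card with hry
  have hp1 : 1 ≤ p := by
    obtain ⟨a, ha, hxa, haP⟩ := hpx
    exact card_pos.mpr ⟨a, mem_inter.mpr ⟨mem_nb.mpr ⟨ha, hxa⟩, mem_colA.mpr ⟨ha, haP⟩⟩⟩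
  have hr1 : 1 ≤ r := by
    obtain ⟨b, hb, hxb, hbP⟩ := hrx
    exact card_pos.mpr ⟨b, mem_inter.mpr ⟨mem_nb.mpr ⟨hb, hxb⟩, mem_colB.mpr ⟨hb, hbP⟩⟩⟩
  have hsplitX : dIn G s x = p + r := by
    rw [dIn, ← hNXs, hp, hr, ← card_union_of_disjoint
      ((colA_disj_colB s' P).mono inter_subset_right inter_subset_right)]
    congr 1
    rw [← Finset.inter_union_distrib_left, colA_union_colB,
      Finset.inter_eq_left.mpr nb_subset]
  have hsplitY : dIn G s y = py + ry := by
    rw [dIn, ← hNYs, hpy, hry, ← card_union_of_disjoint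
      ((colA_disj_colB s' P).mono inter_subset_right inter_subset_right)]
    congr 1
    rw [← Finset.inter_union_distrib_left, colA_union_colB,
      Finset.inter_eq_left.mpr nb_subset]
  have hcol := E2_col hP M hMsub hMadj
  have hE2 : E2 G s = E2 G s' + 2 * dIn G s x + 2 * dIn G s y := E2_erase2 hx hy hxy hnadj
  have hABcard : A.card + B.card = s'.card := colA_card_add_colB_card s' P
  have hrB : r + ry ≤ B.card := by
    rw [hr, hry, ← card_union_of_disjoint (hdisjXY.mono inter_subset_left inter_subset_left)]
    exact card_le_card (union_subset inter_subset_right inter_subset_right)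
  have hpA : p + py ≤ A.card := by
    rw [hp, hpy, ← card_union_of_disjoint (hdisjXY.mono inter_subset_left inter_subset_left)]
    exact card_le_card (union_subset inter_subset_right inter_subset_right)
  have hprb := pr_bound hp1 hr1
  by_cases hpy0 : py = 0
  · have hQ : B.card * (A.card + 1) ≤ Qf (s.card - 1) := by
      have h := Qf_ab B.card (A.card + 1)
      have he : B.card + (A.card + 1) = s.card - 1 := by omega
      rwa [he] at h
    have hring : B.card * (A.card + 1) = A.card * B.card + B.card := by ring
    have h0 : py * ry = 0 := by rw [hpy0]; ring
    rw [hMcard, h0] at hcol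
    set ab := A.card * B.card
    set bb := B.card * (A.card + 1)
    set pr2 := p * r
    set q1 := Qf (s.card - 1)
    omega
  · by_cases hry0 : ry = 0
    · have hQ : A.card * (B.card + 1) ≤ Qf (s.card - 1) := by
        have h := Qf_ab A.card (B.card + 1)
        have he : A.card + (B.card + 1) = s.card - 1 := by omega
        rwa [he] at h
      have hring : A.card * (B.card + 1) = A.card * B.card + A.card := by ring
      have h0 : py * ry = 0 := by rw [hry0]; ring
      rw [hMcard, h0] at hcol
      set ab := A.card * B.card
      set aa := A.card * (B.card + 1)
      set pr2 := p * r
      set q1 := Qf (s.card - 1)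
      omega
    · have hpy1 : 1 ≤ py := by omega
      have hry1 : 1 ≤ ry := by omega
      have hprb2 := pr_bound hpy1 hry1
      have hQ2 : A.card * B.card ≤ Qf (s.card - 2) := by
        have h := Qf_ab A.card B.card
        have he : A.card + B.card = s.card - 2 := by omega
        rwa [he] at h
      obtain ⟨k, hk⟩ : ∃ k, s.card = k + 5 := ⟨s.card - 5, by omega⟩
      have hstep := Qf_step (k + 3)
      have e1 : s.card - 1 = k + 4 := by omega
      have e2 : s.card - 2 = k + 3 := by omega
      rw [e2] at hQ2
      rw [e1]
      have e3 : k + 3 + 1 = k + 4 := by omega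
      rw [e3] at hstep
      rw [hMcard] at hcol
      set ab := A.card * B.card
      set pr2 := p * r
      set pr3 := py * ry
      set q1 := Qf (k + 4)
      set q2 := Qf (k + 3)
      omega

/-- Theorem B: nonbipartite triangle-free graph with a remote pair has at most q(n) edges -/
theorem thmB (hTF : G.CliqueFree 3) {s : Finset V} (hnb : ¬ BipOn G s) {x y : V}
    (hx : x ∈ s) (hy : y ∈ s) (hxy : x ≠ y) (hnadj : ¬ G.Adj x y)
    (hnoz : ∀ z ∈ s, ¬ (G.Adj x z ∧ G.Adj z y)) :
    E2 G s ≤ 2 * Qf (s.card - 1) := by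
  have hc5 : 5 ≤ s.card := nonbip_card5 hTF hnb
  set s' := (s.erase x).erase y with hs'
  have hcard' : s'.card = s.card - 2 := by
    rw [hs', card_erase_of_mem (mem_erase.mpr ⟨hxy.symm, hy⟩), card_erase_of_mem hx]
    omega
  have hdisjXY : Disjoint (nb G s x) (nb G s y) := by
    rw [Finset.disjoint_left]
    intro z hz hz'
    exact hnoz z (mem_nb.mp hz).1 ⟨(mem_nb.mp hz).2, (mem_nb.mp hz').2.symm⟩
  have hsub : nb G s x ∪ nb G s y ⊆ s' := by
    intro z hz
    rcases Finset.mem_union.mp hz with h | h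
    · obtain ⟨hzs, hadj⟩ := mem_nb.mp h
      refine mem_erase.mpr ⟨fun hzy => hnadj (hzy ▸ hadj), mem_erase.mpr ⟨hadj.ne', hzs⟩⟩
    · obtain ⟨hzs, hadj⟩ := mem_nb.mp h
      refine mem_erase.mpr ⟨hadj.ne', mem_erase.mpr ⟨fun hzx => hnadj (hzx ▸ hadj).symm, hzs⟩⟩
  have hdsum : dIn G s x + dIn G s y ≤ s.card - 2 := by
    rw [dIn, dIn, ← card_union_of_disjoint hdisjXY, ← hcard']
    exact card_le_card hsub
  have hd3 : dIn G s x + dIn G s y ≤ s.card - 3 := by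
    by_contra hcon
    have heq : (nb G s x).card + (nb G s y).card = s.card - 2 := by
      have h1 : dIn G s x = (nb G s x).card := rfl
      have h2 : dIn G s y = (nb G s y).card := rfl
      omega
    have huni : nb G s x ∪ nb G s y = s' := by
      apply eq_of_subset_of_card_le hsub
      rw [card_union_of_disjoint hdisjXY]
      omega
    exact hnb (partition_bip hTF hx hy hxy hnadj hnoz
      (fun w hw => Finset.mem_union.mp (huni ▸ hw)))
  have hE2 : E2 G s = E2 G s' + 2 * dIn G s x + 2 * dIn G s y := E2_erase2 hx hy hxy hnadj
  by_cases hbs' : BipOn G s'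
  · obtain ⟨P, hP⟩ := hbs'
    rcases extend2 hnb hx hy hxy hnadj hP with hX | hY
    · obtain ⟨a, ha, b, hb, h1, h2, h3, h4⟩ := hX
      exact thmB_core hTF hnb hx hy hxy hnadj hnoz hP ⟨a, ha, h1, h3⟩ ⟨b, hb, h2, h4⟩
    · obtain ⟨a, ha, b, hb, h1, h2, h3, h4⟩ := hY
      have hcomm : (s.erase x).erase y = (s.erase y).erase x := by
        ext w; simp only [mem_erase]; tauto
      have hP' : PCol G ((s.erase y).erase x) P := by rwa [hs', hcomm] at hP
      have hnoz' : ∀ z ∈ s, ¬ (G.Adj y z ∧ G.Adj z x) := fun z hz h =>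
        hnoz z hz ⟨h.2.symm, h.1.symm⟩
      have := thmB_core hTF hnb hy hx hxy.symm (fun h => hnadj h.symm) hnoz' hP'
        ⟨a, by rwa [hcomm] at ha, h1, h3⟩ ⟨b, by rwa [hcomm] at hb, h2, h4⟩
      exact this
  · have hIH := thmA hTF s' hbs'
    obtain ⟨k, hk⟩ : ∃ k, s.card = k + 5 := ⟨s.card - 5, by omega⟩
    have e1 : s'.card - 1 = k + 2 := by omega
    rw [e1] at hIH
    have hstep := Qf_step2 (k + 2)
    have e2 : k + 2 + 2 = k + 4 := by omega
    rw [e2] at hstep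
    have e3 : s.card - 1 = k + 4 := by omega
    rw [e3]
    set q1 := Qf (k + 4)
    set q2 := Qf (k + 2)
    omega

lemma E2_univ_eq (G : SimpleGraph V) [DecidableRel G.Adj] :
    E2 G univ = 2 * G.edgeFinset.card := by
  rw [SimpleGraph.two_mul_card_edgeFinset, E2, Finset.univ_product_univ]

lemma PCol_mono {s t : Finset V} {P : Set V} (h : t ⊆ s) (hP : PCol G s P) : PCol G t P :=
  fun a ha b hb => hP a (h ha) b (h hb)

lemma PCol_compl {s : Finset V} {P : Set V} (hP : PCol G s P) : PCol G s {w | w ∉ P} := by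
  intro a ha b hb hab
  have := hP a ha b hb hab
  simp only [Set.mem_setOf_eq]
  tauto

/-- bipartite case: a same-side remote pair forces few edges -/
lemma bip_remote_bound {P : Set V} (hP : PCol G univ P) {x y : V}
    (hPx : x ∈ P) (hPy : y ∈ P) (hxy : x ≠ y) (hnadj : ¬ G.Adj x y)
    (hnoz : ∀ z : V, ¬ (G.Adj x z ∧ G.Adj z y)) :
    E2 G univ ≤ 2 * Qf (Fintype.card V - 1) := by
  classical
  set s' := ((univ : Finset V).erase x).erase y with hs'
  have hx : x ∈ (univ : Finset V) := mem_univ x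
  have hy : y ∈ (univ : Finset V) := mem_univ y
  have hcard' : s'.card = Fintype.card V - 2 := by
    rw [hs', card_erase_of_mem (mem_erase.mpr ⟨hxy.symm, hy⟩), card_erase_of_mem hx,
      card_univ]
    omega
  have hP' : PCol G s' P := PCol_mono (fun a _ => mem_univ a) hP
  have hE2 : E2 G univ = E2 G s' + 2 * dIn G univ x + 2 * dIn G univ y :=
    E2_erase2 hx hy hxy hnadj
  have hcol := E2_col hP' (∅ : Finset (V × V)) (empty_subset _) (by simp)
  simp only [card_empty, mul_zero, add_zero] at hcol
  have hnbB : ∀ v : V, nb G univ v ⊆ colB s' P → dIn G univ v ≤ dIn G univ v := fun _ _ => le_rfl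
  have hsubx : nb G univ x ⊆ colB s' P := by
    intro v hv
    obtain ⟨_, hadj⟩ := mem_nb.mp hv
    have hvy : v ≠ y := fun h => hnadj (h ▸ hadj)
    refine mem_colB.mpr ⟨mem_erase.mpr ⟨hvy, mem_erase.mpr ⟨hadj.ne', mem_univ v⟩⟩, ?_⟩
    exact (hP x (mem_univ x) v (mem_univ v) hadj).mp hPx
  have hsuby : nb G univ y ⊆ colB s' P := by
    intro v hv
    obtain ⟨_, hadj⟩ := mem_nb.mp hv
    have hvx : v ≠ x := fun h => hnadj (h ▸ hadj).symm
    refine mem_colB.mpr ⟨mem_erase.mpr ⟨hadj.ne', mem_erase.mpr ⟨hvx, mem_univ v⟩⟩, ?_⟩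
    exact (hP y (mem_univ y) v (mem_univ v) hadj).mp hPy
  have hdisjXY : Disjoint (nb G univ x) (nb G univ y) := by
    rw [Finset.disjoint_left]
    intro z hz hz'
    exact hnoz z ⟨(mem_nb.mp hz).2, (mem_nb.mp hz').2.symm⟩
  have hdsum : dIn G univ x + dIn G univ y ≤ (colB s' P).card := by
    rw [dIn, dIn, ← card_union_of_disjoint hdisjXY]
    exact card_le_card (union_subset hsubx hsuby)
  have hABcard : (colA s' P).card + (colB s' P).card = s'.card := colA_card_add_colB_card s' P
  have hQ : (colB s' P).card * ((colA s' P).card + 1) ≤ Qf (Fintype.card V - 1) := by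
    have h := Qf_ab (colB s' P).card ((colA s' P).card + 1)
    have hc2 : 2 ≤ Fintype.card V := by
      have : ({x, y} : Finset V) ⊆ univ := fun w _ => mem_univ w
      calc 2 = ({x,y} : Finset V).card := (card_pair hxy).symm
        _ ≤ _ := card_le_card this
        _ = _ := card_univ
    have he : (colB s' P).card + ((colA s' P).card + 1) = Fintype.card V - 1 := by omega
    rwa [he] at h
  have hring : (colB s' P).card * ((colA s' P).card + 1)
      = (colA s' P).card * (colB s' P).card + (colB s' P).card := by ring
  set ab := (colA s' P).card * (colB s' P).card
  set bb := (colB s' P).card * ((colA s' P).card + 1)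
  set q1 := Qf (Fintype.card V - 1)
  omega

/-- no isolated vertex in a nonbipartite extremal graph -/
lemma no_isolated (hTF : G.CliqueFree 3) (hnb : ¬ BipOn G (univ : Finset V))
    (hq : 2 * Qf (Fintype.card V - 1) ≤ E2 G univ) (v : V) (hd : dIn G univ v = 0) :
    False := by
  have hnbv : nb G univ v = ∅ := card_eq_zero.mp hd
  have hnb' : ¬ BipOn G (univ.erase v) := by
    rintro ⟨P, hP⟩
    apply hnb
    refine ⟨P, ?_⟩
    intro a ha b hb hab
    have hav : a ≠ v := by
      rintro rfl
      have : b ∈ nb G univ a := mem_nb.mpr ⟨mem_univ b, hab⟩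
      rw [hnbv] at this
      exact absurd this (notMem_empty b)
    have hbv : b ≠ v := by
      rintro rfl
      have : a ∈ nb G univ b := mem_nb.mpr ⟨mem_univ a, hab.symm⟩
      rw [hnbv] at this
      exact absurd this (notMem_empty a)
    exact hP a (mem_erase.mpr ⟨hav, ha⟩) b (mem_erase.mpr ⟨hbv, hb⟩) hab
  have hA := thmA hTF (univ.erase v) hnb'
  have hEe : E2 G univ = E2 G (univ.erase v) + 2 * dIn G (univ.erase v) v :=
    E2_erase (mem_univ v)
  have hdv : dIn G (univ.erase v) v = 0 :=
    Nat.le_antisymm (hd ▸ dIn_mono (erase_subset _ _) v) (Nat.zero_le _)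
  have hc5 : 5 ≤ Fintype.card V := by
    have := nonbip_card5 hTF hnb
    rwa [card_univ] at this
  have hce : (univ.erase v).card = Fintype.card V - 1 := by
    rw [card_erase_of_mem (mem_univ v), card_univ]
  obtain ⟨k, hk⟩ : ∃ k, Fintype.card V = k + 5 := ⟨Fintype.card V - 5, by omega⟩
  have e1 : (univ.erase v).card - 1 = k + 3 := by omega
  rw [e1] at hA
  have e2 : Fintype.card V - 1 = k + 4 := by omega
  rw [e2] at hq
  have hstep := Qf_step (k + 3)
  have e3 : k + 3 + 1 = k + 4 := by omega
  rw [e3] at hstep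
  set q1 := Qf (k+4)
  set q2 := Qf (k+3)
  omega

/-- exactness version of the coloring bound: in case of equality every allowed pair
is an edge -/
lemma E2_col_exact {s : Finset V} {P : Set V} (hP : PCol G s P) (M : Finset (V × V))
    (hM : M ⊆ (colA s P) ×ˢ (colB s P)) (hMadj : ∀ p ∈ M, ¬ G.Adj p.1 p.2)
    (heq : 2 * ((colA s P).card * (colB s P).card) ≤ E2 G s + 2 * M.card) :
    ∀ u ∈ colA s P, ∀ v ∈ colB s P, (u, v) ∉ M → G.Adj u v := by
  classical
  set F : Finset (V × V) := (s ×ˢ s).filter (fun p => G.Adj p.1 p.2) with hF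
  set F1 : Finset (V × V) := F.filter (fun p => p.1 ∈ P) with hF1
  set F2 : Finset (V × V) := F.filter (fun p => ¬ p.1 ∈ P) with hF2
  have memF : ∀ p : V × V, p ∈ F ↔ (p.1 ∈ s ∧ p.2 ∈ s ∧ G.Adj p.1 p.2) := by
    intro p; simp [hF, Finset.mem_product]; tauto
  have hsplit : F1.card + F2.card = F.card := card_filter_add_card_filter_not _
  have hswap : F1.card = F2.card := by
    apply Finset.card_bij' (fun p _ => Prod.swap p) (fun p _ => Prod.swap p)
    · intro p hp
      simp only [hF1, mem_filter] at hp
      have hm := (memF p).mp hp.1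
      simp only [hF2, mem_filter]
      refine ⟨(memF _).mpr ⟨hm.2.1, hm.1, hm.2.2.symm⟩, ?_⟩
      intro hP2
      exact ((hP p.1 hm.1 p.2 hm.2.1 hm.2.2).mp hp.2) hP2
    · intro p hp
      simp only [hF2, mem_filter] at hp
      have hm := (memF p).mp hp.1
      simp only [hF1, mem_filter]
      refine ⟨(memF _).mpr ⟨hm.2.1, hm.1, hm.2.2.symm⟩, ?_⟩
      by_contra hP2
      exact hp.2 ((hP p.1 hm.1 p.2 hm.2.1 hm.2.2).mpr hP2)
    · intro p _; rfl
    · intro p _; rfl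
  have hdisj : Disjoint F1 M := by
    rw [Finset.disjoint_left]
    intro p hp hpM
    simp only [hF1, mem_filter] at hp
    exact hMadj p hpM ((memF p).mp hp.1).2.2
  have hsub : F1 ∪ M ⊆ (colA s P) ×ˢ (colB s P) := by
    apply union_subset _ hM
    intro p hp
    simp only [hF1, mem_filter] at hp
    have hm := (memF p).mp hp.1
    rw [Finset.mem_product]
    exact ⟨mem_colA.mpr ⟨hm.1, hp.2⟩,
      mem_colB.mpr ⟨hm.2.1, (hP p.1 hm.1 p.2 hm.2.1 hm.2.2).mp hp.2⟩⟩
  have hEF : E2 G s = F.card := rfl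
  have hcard : ((colA s P) ×ˢ (colB s P)).card ≤ (F1 ∪ M).card := by
    rw [card_union_of_disjoint hdisj, card_product]
    omega
  have huni : F1 ∪ M = (colA s P) ×ˢ (colB s P) :=
    eq_of_subset_of_card_le hsub hcard
  intro u hu v hv hM'
  have : (u, v) ∈ F1 ∪ M := by
    rw [huni, Finset.mem_product]
    exact ⟨hu, hv⟩
  rcases Finset.mem_union.mp this with h | h
  · simp only [hF1, mem_filter] at h
    exact ((memF _).mp h.1).2.2
  · exact absurd h hM'

/-- facts in case I: the deleted graph is still nonbipartite -/
lemma caseI_facts (hTF : G.CliqueFree 3) (hnb : ¬ BipOn G (univ : Finset V))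
    (hq : E2 G univ = 2 * Qf (Fintype.card V - 1))
    {x y : V} (hxy : x ≠ y) (hnadj : ¬ G.Adj x y)
    (hnoz : ∀ z : V, ¬ (G.Adj x z ∧ G.Adj z y))
    (hnb' : ¬ BipOn G (((univ : Finset V).erase x).erase y)) :
    (dIn G univ x + dIn G univ y + 3 = Fintype.card V) ∧
    (∀ u v : V, u ≠ v → ¬ G.Adj u v → (∀ z : V, ¬ (G.Adj u z ∧ G.Adj z v)) →
      u = x ∨ u = y ∨ v = x ∨ v = y) := by
  have hc5 : 5 ≤ Fintype.card V := by
    have := nonbip_card5 hTF hnb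
    rwa [card_univ] at this
  set s' := ((univ : Finset V).erase x).erase y with hs'
  have hcard' : s'.card = Fintype.card V - 2 := by
    rw [hs', card_erase_of_mem (mem_erase.mpr ⟨hxy.symm, mem_univ y⟩),
      card_erase_of_mem (mem_univ x), card_univ]
    omega
  have hdisjXY : Disjoint (nb G univ x) (nb G univ y) := by
    rw [Finset.disjoint_left]
    intro z hz hz'
    exact hnoz z ⟨(mem_nb.mp hz).2, (mem_nb.mp hz').2.symm⟩
  have hsub : nb G univ x ∪ nb G univ y ⊆ s' := by
    intro z hz
    rcases Finset.mem_union.mp hz with h | h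
    · obtain ⟨hzs, hadj⟩ := mem_nb.mp h
      exact mem_erase.mpr ⟨fun hzy => hnadj (hzy ▸ hadj), mem_erase.mpr ⟨hadj.ne', hzs⟩⟩
    · obtain ⟨hzs, hadj⟩ := mem_nb.mp h
      exact mem_erase.mpr ⟨hadj.ne', mem_erase.mpr ⟨fun hzx => hnadj (hzx ▸ hadj).symm, hzs⟩⟩
  have hdsum : dIn G univ x + dIn G univ y ≤ Fintype.card V - 2 := by
    rw [dIn, dIn, ← card_union_of_disjoint hdisjXY, ← hcard']
    exact card_le_card hsub
  have hd3 : dIn G univ x + dIn G univ y ≤ Fintype.card V - 3 := by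
    by_contra hcon
    have heq : (nb G univ x).card + (nb G univ y).card = Fintype.card V - 2 := by
      have h1 : dIn G univ x = (nb G univ x).card := rfl
      have h2 : dIn G univ y = (nb G univ y).card := rfl
      omega
    have huni : nb G univ x ∪ nb G univ y = s' := by
      apply eq_of_subset_of_card_le hsub
      rw [card_union_of_disjoint hdisjXY]
      omega
    exact hnb (partition_bip hTF (mem_univ x) (mem_univ y) hxy hnadj
      (fun z _ => hnoz z) (fun w hw => Finset.mem_union.mp (huni ▸ hw)))
  have hE2 : E2 G univ = E2 G s' + 2 * dIn G univ x + 2 * dIn G univ y :=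
    E2_erase2 (mem_univ x) (mem_univ y) hxy hnadj
  have hA := thmA hTF s' hnb'
  obtain ⟨k, hk⟩ : ∃ k, Fintype.card V = k + 5 := ⟨Fintype.card V - 5, by omega⟩
  have e1 : s'.card - 1 = k + 2 := by omega
  rw [e1] at hA
  have e2 : Fintype.card V - 1 = k + 4 := by omega
  rw [e2] at hq
  have hstep := Qf_step2 (k + 2)
  have e3 : k + 2 + 2 = k + 4 := by omega
  rw [e3] at hstep
  have hEex : E2 G s' = 2 * (Qf (k + 2) + 1) ∧
      dIn G univ x + dIn G univ y + 3 = Fintype.card V := by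
    constructor <;> omega
  refine ⟨hEex.2, ?_⟩
  intro u v huv hnadj' hnoz' 
  by_contra hcon
  push_neg at hcon
  obtain ⟨hux, huy, hvx, hvy⟩ := hcon
  have hu : u ∈ s' := mem_erase.mpr ⟨huy, mem_erase.mpr ⟨hux, mem_univ u⟩⟩
  have hv : v ∈ s' := mem_erase.mpr ⟨hvy, mem_erase.mpr ⟨hvx, mem_univ v⟩⟩
  have hB := thmB hTF hnb' hu hv huv hnadj' (fun z _ => hnoz' z)
  rw [e1] at hB
  omega

def Rem (G : SimpleGraph V) (x y : V) : Prop :=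
  x ≠ y ∧ ¬ G.Adj x y ∧ ∀ z : V, ¬ (G.Adj x z ∧ G.Adj z y)

lemma Rem.symm' {x y : V} (h : Rem G x y) : Rem G y x :=
  ⟨h.1.symm, fun ha => h.2.1 ha.symm, fun z hz => h.2.2 z ⟨hz.2.symm, hz.1.symm⟩⟩

/-- three pairwise remote vertices are impossible -/
lemma no_triangle_config (hTF : G.CliqueFree 3) (hnb : ¬ BipOn G (univ : Finset V))
    (hq : E2 G univ = 2 * Qf (Fintype.card V - 1)) {x y z : V}
    (rxy : Rem G x y) (rxz : Rem G x z) (ryz : Rem G y z)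
    (hsum : dIn G univ x + dIn G univ y + 3 = Fintype.card V) : False := by
  obtain ⟨hxy, haxy, hzxy⟩ := rxy
  obtain ⟨hxz, haxz, hzxz⟩ := rxz
  obtain ⟨hyz, hayz, hzyz⟩ := ryz
  set T : Finset V := (nb G univ x ∪ nb G univ y) ∪ {x, y, z} with hT
  have hdisj1 : Disjoint (nb G univ x) (nb G univ y) := by
    rw [Finset.disjoint_left]
    intro t ht ht'
    exact hzxy t ⟨(mem_nb.mp ht).2, (mem_nb.mp ht').2.symm⟩
  have hxnx : ∀ t, t ∈ ({x, y, z} : Finset V) → t ∉ nb G univ x ∪ nb G univ y := by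
    intro t ht
    simp only [mem_insert, mem_singleton] at ht
    intro hmem
    rcases Finset.mem_union.mp hmem with h | h
    · have hadj := (mem_nb.mp h).2
      rcases ht with rfl | rfl | rfl
      · exact G.irrefl hadj
      · exact haxy hadj
      · exact haxz hadj
    · have hadj := (mem_nb.mp h).2
      rcases ht with rfl | rfl | rfl
      · exact haxy hadj.symm
      · exact G.irrefl hadj
      · exact hayz hadj
  have hdisj2 : Disjoint (nb G univ x ∪ nb G univ y) ({x, y, z} : Finset V) := by
    rw [Finset.disjoint_right]
    intro t ht
    exact hxnx t ht
  have hcard3 : ({x, y, z} : Finset V).card = 3 := by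
    rw [card_insert_of_notMem (by simp [hxy, hxz]), card_insert_of_notMem (by simp [hyz]),
      card_singleton]
  have hTcard : T.card = Fintype.card V := by
    rw [hT, card_union_of_disjoint hdisj2, card_union_of_disjoint hdisj1, hcard3]
    have h1 : dIn G univ x = (nb G univ x).card := rfl
    have h2 : dIn G univ y = (nb G univ y).card := rfl
    omega
  have hTuniv : T = univ := eq_of_subset_of_card_le (fun t _ => mem_univ t)
    (by rw [hTcard, card_univ])
  have hnz : nb G univ z = ∅ := by
    rw [eq_empty_iff_forall_notMem]
    intro t ht
    have hadj := (mem_nb.mp ht).2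
    have htT : t ∈ T := hTuniv ▸ mem_univ t
    rw [hT] at htT
    rcases Finset.mem_union.mp htT with h | h
    · rcases Finset.mem_union.mp h with h' | h'
      · exact hzxz t ⟨(mem_nb.mp h').2, hadj.symm⟩
      · exact hzyz t ⟨(mem_nb.mp h').2, hadj.symm⟩
    · simp only [mem_insert, mem_singleton] at h
      rcases h with rfl | rfl | rfl
      · exact haxz hadj.symm
      · exact hayz hadj.symm
      · exact G.irrefl hadj
  exact no_isolated hTF hnb (le_of_eq hq.symm) z (by rw [dIn, hnz, card_empty])

/-- star configuration, inner case: D = 2 with y adjacent to both z and w -/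
lemma star_core2 (hTF : G.CliqueFree 3) (hnb : ¬ BipOn G (univ : Finset V))
    (hq : E2 G univ = 2 * Qf (Fintype.card V - 1)) {c y z w : V}
    (rcy : Rem G c y) (rcz : Rem G c z) (rcw : Rem G c w)
    (hzw : z ≠ w)
    (hsy : dIn G univ c + dIn G univ y + 3 = Fintype.card V)
    (hyz : G.Adj y z) (hyw : G.Adj y w)
    (hD : dIn G univ y = 2) (hDz : dIn G univ z = 2) (hDw : dIn G univ w = 2)
    (hWuni : nb G univ y ∪ nb G univ z = univ \ insert c (nb G univ c))
    (hmeetz : ∀ u v : V, u ≠ v → ¬ G.Adj u v → (∀ t : V, ¬ (G.Adj u t ∧ G.Adj t v)) →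
      u = c ∨ u = z ∨ v = c ∨ v = z) : False := by
  set W : Finset V := univ \ insert c (nb G univ c) with hW
  have memW : ∀ v, v ∈ W ↔ (v ≠ c ∧ ¬ G.Adj c v) := by
    intro v
    rw [hW, mem_sdiff, mem_insert]
    simp only [mem_univ, true_and, mem_nb, ne_eq]
    tauto
  -- nb y = {z, w}
  have hnby : nb G univ y = {z, w} := by
    symm
    apply eq_of_subset_of_card_le
    · intro t ht
      rcases mem_insert.mp ht with rfl | ht'
      · exact mem_nb.mpr ⟨mem_univ t, hyz⟩
      · rw [mem_singleton] at ht'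
        subst ht'
        exact mem_nb.mpr ⟨mem_univ t, hyw⟩
    · rw [card_pair hzw]
      exact le_of_eq hD
  -- nb z = {y, u}
  have hyz' : y ∈ nb G univ z := mem_nb.mpr ⟨mem_univ y, hyz.symm⟩
  have hcz : ((nb G univ z).erase y).card = 1 := by
    rw [card_erase_of_mem hyz']
    unfold dIn at hDz
    omega
  obtain ⟨u, hu⟩ := card_eq_one.mp hcz
  have huz : u ∈ nb G univ z := (erase_subset _ _) (hu ▸ mem_singleton_self u)
  have huy : u ≠ y := by
    have := hu ▸ mem_singleton_self u
    exact (mem_erase.mp ((hu.symm ▸ mem_singleton_self u) : u ∈ (nb G univ z).erase y)).1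
  have hnbz : nb G univ z = {y, u} := by
    symm
    apply eq_of_subset_of_card_le
    · intro t ht
      rcases mem_insert.mp ht with rfl | ht'
      · exact hyz'
      · rw [mem_singleton] at ht'
        subst ht'
        exact huz
    · rw [card_pair (Ne.symm huy)]
      exact le_of_eq hDz
  -- nb w ⊆ nb z
  have hNwW : nb G univ w ⊆ W := by
    intro t ht
    obtain ⟨_, hadj⟩ := mem_nb.mp ht
    rw [memW]
    constructor
    · rintro rfl; exact rcw.2.1 hadj.symm
    · intro h; exact rcw.2.2 t ⟨h, hadj.symm⟩
  have hdisjyw : Disjoint (nb G univ y) (nb G univ w) := nb_disj_of_adj hTF hyw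
  have hnbw_sub : nb G univ w ⊆ nb G univ z := by
    intro t ht
    have htW : t ∈ W := hNwW ht
    rw [← hWuni] at htW
    rcases Finset.mem_union.mp htW with h | h
    · exact absurd ht (Finset.disjoint_left.mp hdisjyw h)
    · exact h
  -- pick a neighbor of c
  have hdc : 1 ≤ dIn G univ c := by
    by_contra h
    exact no_isolated hTF hnb (le_of_eq hq.symm) c (by omega)
  obtain ⟨α, hα⟩ := card_pos.mp hdc
  have hαadj : G.Adj c α := (mem_nb.mp hα).2
  -- α is not in W
  have hαW : α ∉ W := by
    rw [memW]
    push_neg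
    intro _
    exact hαadj
  have hyα : y ∉ nb G univ c := by
    intro h
    exact rcy.2.1 (mem_nb.mp h).2
  -- remote pair (y, α)
  have hrem : Rem G y α := by
    refine ⟨?_, ?_, ?_⟩
    · rintro rfl; exact hyα hα
    · intro h
      have hmem : α ∈ nb G univ y := mem_nb.mpr ⟨mem_univ α, h⟩
      rw [hnby] at hmem
      have hzW : z ∈ W := (memW z).mpr ⟨rcz.1.symm, rcz.2.1⟩
      have hwW : w ∈ W := (memW w).mpr ⟨rcw.1.symm, rcw.2.1⟩
      rcases mem_insert.mp hmem with h' | h'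
      · exact hαW (h' ▸ hzW)
      · rw [mem_singleton] at h'
        exact hαW (h' ▸ hwW)
    · intro t ⟨h1, h2⟩
      have ht : t ∈ nb G univ y := mem_nb.mpr ⟨mem_univ t, h1⟩
      rw [hnby] at ht
      have hαz : α ∈ nb G univ z → False := by
        intro hc
        rw [hnbz] at hc
        rcases mem_insert.mp hc with h'' | h'
        · exact hyα (h'' ▸ hα)
        · rw [mem_singleton] at h'
          have huW : u ∈ W := by
            rw [← hWuni]; exact Finset.mem_union_right _ huz
          exact hαW (h' ▸ huW)
      rcases mem_insert.mp ht with h'' | h'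
      · exact hαz (mem_nb.mpr ⟨mem_univ α, h'' ▸ h2⟩)
      · rw [mem_singleton] at h'
        exact hαz (hnbw_sub (mem_nb.mpr ⟨mem_univ α, h' ▸ h2⟩))
  -- contradiction with meet property of pair (c, z)
  rcases hmeetz y α hrem.1 hrem.2.1 hrem.2.2 with h | h | h | h
  · exact rcy.1 h.symm
  · exact hyz.ne h
  · subst h; exact G.irrefl hαadj
  · exact hαW (h ▸ (memW z).mpr ⟨rcz.1.symm, rcz.2.1⟩)

/-- star configuration with the middle leaf adjacent: dispatch on D -/
lemma star_core (hTF : G.CliqueFree 3) (hnb : ¬ BipOn G (univ : Finset V))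
    (hq : E2 G univ = 2 * Qf (Fintype.card V - 1)) {c y z w : V}
    (rcy : Rem G c y) (rcz : Rem G c z) (rcw : Rem G c w)
    (hyz_ne : y ≠ z) (hyw_ne : y ≠ w) (hzw : z ≠ w)
    (hsy : dIn G univ c + dIn G univ y + 3 = Fintype.card V)
    (hsz : dIn G univ c + dIn G univ z + 3 = Fintype.card V)
    (hsw : dIn G univ c + dIn G univ w + 3 = Fintype.card V)
    (hyz : G.Adj y z)
    (hmeety : ∀ u v : V, u ≠ v → ¬ G.Adj u v → (∀ t : V, ¬ (G.Adj u t ∧ G.Adj t v)) →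
      u = c ∨ u = y ∨ v = c ∨ v = y)
    (hmeetz : ∀ u v : V, u ≠ v → ¬ G.Adj u v → (∀ t : V, ¬ (G.Adj u t ∧ G.Adj t v)) →
      u = c ∨ u = z ∨ v = c ∨ v = z) : False := by
  set W : Finset V := univ \ insert c (nb G univ c) with hW
  have memW : ∀ v, v ∈ W ↔ (v ≠ c ∧ ¬ G.Adj c v) := by
    intro v
    rw [hW, mem_sdiff, mem_insert]
    simp only [mem_univ, true_and, mem_nb, ne_eq]
    tauto
  have hry' : dIn G univ y = (nb G univ y).card := rfl
  have hrz' : dIn G univ z = (nb G univ z).card := rfl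
  have hrw' : dIn G univ w = (nb G univ w).card := rfl
  have hyW : y ∈ W := (memW y).mpr ⟨rcy.1.symm, rcy.2.1⟩
  have hzW : z ∈ W := (memW z).mpr ⟨rcz.1.symm, rcz.2.1⟩
  have hwW : w ∈ W := (memW w).mpr ⟨rcw.1.symm, rcw.2.1⟩
  have hNyW : nb G univ y ⊆ W := by
    intro t ht
    obtain ⟨_, hadj⟩ := mem_nb.mp ht
    exact (memW t).mpr ⟨fun h => rcy.2.1 (h ▸ hadj).symm, fun h => rcy.2.2 t ⟨h, hadj.symm⟩⟩
  have hNzW : nb G univ z ⊆ W := by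
    intro t ht
    obtain ⟨_, hadj⟩ := mem_nb.mp ht
    exact (memW t).mpr ⟨fun h => rcz.2.1 (h ▸ hadj).symm, fun h => rcz.2.2 t ⟨h, hadj.symm⟩⟩
  have hNwW : nb G univ w ⊆ W := by
    intro t ht
    obtain ⟨_, hadj⟩ := mem_nb.mp ht
    exact (memW t).mpr ⟨fun h => rcw.2.1 (h ▸ hadj).symm, fun h => rcw.2.2 t ⟨h, hadj.symm⟩⟩
  have hWcard : W.card + dIn G univ c + 1 = Fintype.card V := by
    have hsubW : insert c (nb G univ c) ⊆ univ := fun t _ => mem_univ t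
    have hcW : (insert c (nb G univ c)).card = dIn G univ c + 1 := by
      rw [card_insert_of_notMem (fun h => G.irrefl (mem_nb.mp h).2)]
      rfl
    rw [hW, card_sdiff_of_subset hsubW, hcW, card_univ]
    have : (insert c (nb G univ c)).card ≤ Fintype.card V := by
      rw [← card_univ]; exact card_le_card hsubW
    omega
  have hdisjyz : Disjoint (nb G univ y) (nb G univ z) := nb_disj_of_adj hTF hyz
  have hsub2 : nb G univ y ∪ nb G univ z ⊆ W := union_subset hNyW hNzW
  have h2D : dIn G univ y + dIn G univ z ≤ W.card := by
    rw [dIn, dIn, ← card_union_of_disjoint hdisjyz]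
    exact card_le_card hsub2
  have hDyz : dIn G univ y = dIn G univ z := by omega
  have hDyw : dIn G univ y = dIn G univ w := by omega
  have hD2 : dIn G univ y ≤ 2 := by omega
  have hD1 : 1 ≤ dIn G univ y :=
    card_pos.mpr ⟨z, mem_nb.mpr ⟨mem_univ z, hyz⟩⟩
  rcases Nat.lt_or_ge (dIn G univ y) 2 with hD | hD
  · -- D = 1
    have hDy1 : dIn G univ y = 1 := by omega
    have hnby : nb G univ y = {z} := by
      symm
      apply eq_of_subset_of_card_le
      · intro t ht
        rw [mem_singleton] at ht
        subst ht
        exact mem_nb.mpr ⟨mem_univ t, hyz⟩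
      · rw [card_singleton]; exact le_of_eq hDy1
    have hnbz : nb G univ z = {y} := by
      symm
      apply eq_of_subset_of_card_le
      · intro t ht
        rw [mem_singleton] at ht
        subst ht
        exact mem_nb.mpr ⟨mem_univ t, hyz.symm⟩
      · rw [card_singleton]; omega
    have hWuniv : W = {y, z, w} := by
      symm
      apply eq_of_subset_of_card_le
      · intro t ht
        simp only [mem_insert, mem_singleton] at ht
        rcases ht with rfl | rfl | rfl
        · exact hyW
        · exact hzW
        · exact hwW
      · have : ({y, z, w} : Finset V).card = 3 := by
          rw [card_insert_of_notMem (by simp [hyz_ne, hyw_ne]),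
            card_insert_of_notMem (by simp [hzw]), card_singleton]
        omega
    have hnbw : nb G univ w = ∅ := by
      rw [eq_empty_iff_forall_notMem]
      intro t ht
      have htW : t ∈ W := hNwW ht
      rw [hWuniv] at htW
      have hadj := (mem_nb.mp ht).2
      simp only [mem_insert, mem_singleton] at htW
      rcases htW with rfl | rfl | rfl
      · have : w ∈ nb G univ t := mem_nb.mpr ⟨mem_univ w, hadj.symm⟩
        rw [hnby, mem_singleton] at this
        exact hzw this.symm
      · have : w ∈ nb G univ t := mem_nb.mpr ⟨mem_univ w, hadj.symm⟩
        rw [hnbz, mem_singleton] at this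
        exact hyw_ne this.symm
      · exact G.irrefl hadj
    have : dIn G univ w = 0 := by rw [dIn, hnbw, card_empty]
    omega
  · -- D = 2
    have hDy2 : dIn G univ y = 2 := by omega
    have hWuni : nb G univ y ∪ nb G univ z = W := by
      apply eq_of_subset_of_card_le hsub2
      rw [card_union_of_disjoint hdisjyz]
      omega
    have hwmem : w ∈ nb G univ y ∪ nb G univ z := hWuni.symm ▸ hwW
    rcases Finset.mem_union.mp hwmem with h | h
    · exact star_core2 hTF hnb hq rcy rcz rcw hzw hsy hyz (mem_nb.mp h).2 hDy2
        (by omega) (by omega) hWuni hmeetz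
    · have hWuni' : nb G univ z ∪ nb G univ y = W := by rw [Finset.union_comm]; exact hWuni
      exact star_core2 hTF hnb hq rcz rcy rcw hyw_ne hsz hyz.symm (mem_nb.mp h).2
        (by omega) (by omega) (by omega) hWuni' hmeety

/-- the star configuration is impossible -/
lemma no_star_config (hTF : G.CliqueFree 3) (hnb : ¬ BipOn G (univ : Finset V))
    (hq : E2 G univ = 2 * Qf (Fintype.card V - 1)) {c y z w : V}
    (rcy : Rem G c y) (rcz : Rem G c z) (rcw : Rem G c w)
    (hyz_ne : y ≠ z) (hyw_ne : y ≠ w) (hzw : z ≠ w)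
    (hsy : dIn G univ c + dIn G univ y + 3 = Fintype.card V)
    (hsz : dIn G univ c + dIn G univ z + 3 = Fintype.card V)
    (hsw : dIn G univ c + dIn G univ w + 3 = Fintype.card V)
    (hmeety : ∀ u v : V, u ≠ v → ¬ G.Adj u v → (∀ t : V, ¬ (G.Adj u t ∧ G.Adj t v)) →
      u = c ∨ u = y ∨ v = c ∨ v = y)
    (hmeetz : ∀ u v : V, u ≠ v → ¬ G.Adj u v → (∀ t : V, ¬ (G.Adj u t ∧ G.Adj t v)) →
      u = c ∨ u = z ∨ v = c ∨ v = z)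
    (hmeetw : ∀ u v : V, u ≠ v → ¬ G.Adj u v → (∀ t : V, ¬ (G.Adj u t ∧ G.Adj t v)) →
      u = c ∨ u = w ∨ v = c ∨ v = w) : False := by
  set W : Finset V := univ \ insert c (nb G univ c) with hW
  have memW : ∀ v, v ∈ W ↔ (v ≠ c ∧ ¬ G.Adj c v) := by
    intro v
    rw [hW, mem_sdiff, mem_insert]
    simp only [mem_univ, true_and, mem_nb, ne_eq]
    tauto
  have hyW : y ∈ W := (memW y).mpr ⟨rcy.1.symm, rcy.2.1⟩
  have hzW : z ∈ W := (memW z).mpr ⟨rcz.1.symm, rcz.2.1⟩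
  have hwW : w ∈ W := (memW w).mpr ⟨rcw.1.symm, rcw.2.1⟩
  have hNyW : nb G univ y ⊆ W := by
    intro t ht
    obtain ⟨_, hadj⟩ := mem_nb.mp ht
    exact (memW t).mpr ⟨fun h => rcy.2.1 (h ▸ hadj).symm, fun h => rcy.2.2 t ⟨h, hadj.symm⟩⟩
  have hWcard : W.card + dIn G univ c + 1 = Fintype.card V := by
    have hsubW : insert c (nb G univ c) ⊆ univ := fun t _ => mem_univ t
    have hcW : (insert c (nb G univ c)).card = dIn G univ c + 1 := by
      rw [card_insert_of_notMem (fun h => G.irrefl (mem_nb.mp h).2)]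
      rfl
    rw [hW, card_sdiff_of_subset hsubW, hcW, card_univ]
    have : (insert c (nb G univ c)).card ≤ Fintype.card V := by
      rw [← card_univ]; exact card_le_card hsubW
    omega
  set K : Finset V := W \ insert y (nb G univ y) with hK
  have hKcard : K.card = 1 := by
    have hsubK : insert y (nb G univ y) ⊆ W := by
      apply insert_subset hyW hNyW
    have hcK : (insert y (nb G univ y)).card = dIn G univ y + 1 := by
      rw [card_insert_of_notMem (fun h => G.irrefl (mem_nb.mp h).2)]
      rfl
    have hle : (insert y (nb G univ y)).card ≤ W.card := card_le_card hsubK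
    rw [hK, card_sdiff_of_subset hsubK, hcK]
    omega
  have hadj_or : z ∈ nb G univ y ∨ w ∈ nb G univ y := by
    by_contra hcon
    push_neg at hcon
    have hzK : z ∈ K := by
      rw [hK, mem_sdiff, mem_insert]
      exact ⟨hzW, by push_neg; exact ⟨Ne.symm hyz_ne, hcon.1⟩⟩
    have hwK : w ∈ K := by
      rw [hK, mem_sdiff, mem_insert]
      exact ⟨hwW, by push_neg; exact ⟨Ne.symm hyw_ne, hcon.2⟩⟩
    have : 2 ≤ K.card := by
      have : ({z, w} : Finset V) ⊆ K := by
        intro t ht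
        rcases mem_insert.mp ht with rfl | ht'
        · exact hzK
        · rw [mem_singleton] at ht'; subst ht'; exact hwK
      calc 2 = ({z,w} : Finset V).card := (card_pair hzw).symm
        _ ≤ _ := card_le_card this
    omega
  rcases hadj_or with h | h
  · exact star_core hTF hnb hq rcy rcz rcw hyz_ne hyw_ne hzw hsy hsz hsw
      (mem_nb.mp h).2 hmeety hmeetz
  · exact star_core hTF hnb hq rcy rcw rcz hyw_ne hyz_ne (Ne.symm hzw) hsy hsw hsz
      (mem_nb.mp h).2 hmeety hmeetw

/-- degree sum bound for a remote pair in a nonbipartite graph -/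
lemma deg_sum_le (hTF : G.CliqueFree 3) (hnb : ¬ BipOn G (univ : Finset V))
    {x y : V} (rxy : Rem G x y) :
    dIn G univ x + dIn G univ y + 3 ≤ Fintype.card V := by
  obtain ⟨hxy, hnadj, hnoz⟩ := rxy
  have hc5 : 5 ≤ Fintype.card V := by
    have := nonbip_card5 hTF hnb
    rwa [card_univ] at this
  set s' := ((univ : Finset V).erase x).erase y with hs'
  have hcard' : s'.card = Fintype.card V - 2 := by
    rw [hs', card_erase_of_mem (mem_erase.mpr ⟨hxy.symm, mem_univ y⟩),
      card_erase_of_mem (mem_univ x), card_univ]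
    omega
  have hdisjXY : Disjoint (nb G univ x) (nb G univ y) := by
    rw [Finset.disjoint_left]
    intro z hz hz'
    exact hnoz z ⟨(mem_nb.mp hz).2, (mem_nb.mp hz').2.symm⟩
  have hsub : nb G univ x ∪ nb G univ y ⊆ s' := by
    intro z hz
    rcases Finset.mem_union.mp hz with h | h
    · obtain ⟨hzs, hadj⟩ := mem_nb.mp h
      exact mem_erase.mpr ⟨fun hzy => hnadj (hzy ▸ hadj), mem_erase.mpr ⟨hadj.ne', hzs⟩⟩
    · obtain ⟨hzs, hadj⟩ := mem_nb.mp h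
      exact mem_erase.mpr ⟨hadj.ne', mem_erase.mpr ⟨fun hzx => hnadj (hzx ▸ hadj).symm, hzs⟩⟩
  have hdsum : dIn G univ x + dIn G univ y ≤ Fintype.card V - 2 := by
    rw [dIn, dIn, ← card_union_of_disjoint hdisjXY, ← hcard']
    exact card_le_card hsub
  have hd3 : ¬ (dIn G univ x + dIn G univ y = Fintype.card V - 2) := by
    intro heq'
    have heq : (nb G univ x).card + (nb G univ y).card = Fintype.card V - 2 := by
      have h1 : dIn G univ x = (nb G univ x).card := rfl
      have h2 : dIn G univ y = (nb G univ y).card := rfl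
      omega
    have huni : nb G univ x ∪ nb G univ y = s' := by
      apply eq_of_subset_of_card_le hsub
      rw [card_union_of_disjoint hdisjXY]
      omega
    exact hnb (partition_bip hTF (mem_univ x) (mem_univ y) hxy hnadj
      (fun z _ => hnoz z) (fun w hw => Finset.mem_union.mp (huni ▸ hw)))
  omega

/-- Case II: bipartite after deletion forces the remote pairs into two explicit pairs -/
lemma caseII (hTF : G.CliqueFree 3) (hnb : ¬ BipOn G (univ : Finset V))
    (hq : E2 G univ = 2 * Qf (Fintype.card V - 1))
    {x y : V} (rxy : Rem G x y) {P : Set V}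
    (hP : PCol G (((univ : Finset V).erase x).erase y) P)
    (hpx : (nb G univ x ∩ colA (((univ : Finset V).erase x).erase y) P).Nonempty)
    (hrx : (nb G univ x ∩ colB (((univ : Finset V).erase x).erase y) P).Nonempty)
    (hpy0 : nb G univ y ∩ colA (((univ : Finset V).erase x).erase y) P = ∅) :
    ∃ β : V, ∀ u v : V, Rem G u v → s(u, v) = s(x, y) ∨ s(u, v) = s(y, β) := by
  classical
  have hds := deg_sum_le hTF hnb rxy
  obtain ⟨hxy, hnadj, hnoz⟩ := rxy
  have hc5 : 5 ≤ Fintype.card V := by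
    have := nonbip_card5 hTF hnb
    rwa [card_univ] at this
  set s' := ((univ : Finset V).erase x).erase y with hs'
  set A := colA s' P with hA
  set B := colB s' P with hB
  set NX := nb G univ x with hNX
  set NY := nb G univ y with hNY
  have hcard' : s'.card = Fintype.card V - 2 := by
    rw [hs', card_erase_of_mem (mem_erase.mpr ⟨hxy.symm, mem_univ y⟩),
      card_erase_of_mem (mem_univ x), card_univ]
    omega
  have hNXs : NX ⊆ s' := by
    intro z hz
    obtain ⟨_, hadj⟩ := mem_nb.mp hz
    exact mem_erase.mpr ⟨fun hzy => hnadj (hzy ▸ hadj), mem_erase.mpr ⟨hadj.ne', mem_univ z⟩⟩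
  have hNYs : NY ⊆ s' := by
    intro z hz
    obtain ⟨_, hadj⟩ := mem_nb.mp hz
    exact mem_erase.mpr ⟨hadj.ne',
      mem_erase.mpr ⟨fun hzx => hnadj (hzx ▸ hadj).symm, mem_univ z⟩⟩
  have hdisjXY : Disjoint NX NY := by
    rw [hNX, hNY, Finset.disjoint_left]
    intro z hz hz'
    exact hnoz z ⟨(mem_nb.mp hz).2, (mem_nb.mp hz').2.symm⟩
  have hABuni : A ∪ B = s' := colA_union_colB s' P
  set M := (NX ∩ A) ×ˢ (NX ∩ B) ∪ (NY ∩ A) ×ˢ (NY ∩ B) with hM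
  have hMsub : M ⊆ A ×ˢ B :=
    union_subset (product_subset_product inter_subset_right inter_subset_right)
      (product_subset_product inter_subset_right inter_subset_right)
  have hMadj : ∀ q ∈ M, ¬ G.Adj q.1 q.2 := by
    intro q hq' hadj
    rcases Finset.mem_union.mp hq' with h | h
    · rw [Finset.mem_product] at h
      exact tri_free hTF x q.1 q.2 (mem_nb.mp (mem_inter.mp h.1).1).2
        (mem_nb.mp (mem_inter.mp h.2).1).2 hadj
    · rw [Finset.mem_product] at h
      exact tri_free hTF y q.1 q.2 (mem_nb.mp (mem_inter.mp h.1).1).2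
        (mem_nb.mp (mem_inter.mp h.2).1).2 hadj
  have hMdisj : Disjoint ((NX ∩ A) ×ˢ (NX ∩ B)) ((NY ∩ A) ×ˢ (NY ∩ B)) := by
    rw [Finset.disjoint_left]
    intro q hq' hq''
    rw [Finset.mem_product] at hq' hq''
    exact Finset.disjoint_left.mp hdisjXY (mem_inter.mp hq'.1).1 (mem_inter.mp hq''.1).1
  have hMcard : M.card = (NX ∩ A).card * (NX ∩ B).card + (NY ∩ A).card * (NY ∩ B).card := by
    rw [hM, card_union_of_disjoint hMdisj, card_product, card_product]
  set p := (NX ∩ A).card with hp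
  set r := (NX ∩ B).card with hr
  set py := (NY ∩ A).card with hpy
  set ry := (NY ∩ B).card with hry
  have hpyz : py = 0 := by rw [hpy, hpy0, card_empty]
  have hp1 : 1 ≤ p := card_pos.mpr hpx
  have hr1 : 1 ≤ r := card_pos.mpr hrx
  have hsplitX : dIn G univ x = p + r := by
    rw [dIn, hp, hr, ← card_union_of_disjoint
      ((colA_disj_colB s' P).mono inter_subset_right inter_subset_right)]
    congr 1
    rw [← Finset.inter_union_distrib_left, hABuni, Finset.inter_eq_left.mpr hNXs]
  have hsplitY : dIn G univ y = py + ry := by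
    rw [dIn, hpy, hry, ← card_union_of_disjoint
      ((colA_disj_colB s' P).mono inter_subset_right inter_subset_right)]
    congr 1
    rw [← Finset.inter_union_distrib_left, hABuni, Finset.inter_eq_left.mpr hNYs]
  have hcol := E2_col hP M hMsub hMadj
  have hE2 : E2 G univ = E2 G s' + 2 * dIn G univ x + 2 * dIn G univ y :=
    E2_erase2 (mem_univ x) (mem_univ y) hxy hnadj
  have hABcard : A.card + B.card = s'.card := colA_card_add_colB_card s' P
  have hrB : r + ry ≤ B.card := by
    rw [hr, hry, ← card_union_of_disjoint (hdisjXY.mono inter_subset_left inter_subset_left)]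
    exact card_le_card (union_subset inter_subset_right inter_subset_right)
  have hpA : p + py ≤ A.card := by
    rw [hp, hpy, ← card_union_of_disjoint (hdisjXY.mono inter_subset_left inter_subset_left)]
    exact card_le_card (union_subset inter_subset_right inter_subset_right)
  have hprb := pr_bound hp1 hr1
  have hQb : B.card * (A.card + 1) ≤ Qf (Fintype.card V - 1) := by
    have h := Qf_ab B.card (A.card + 1)
    have he : B.card + (A.card + 1) = Fintype.card V - 1 := by omega
    rwa [he] at h
  have hringb : B.card * (A.card + 1) = A.card * B.card + B.card := by ring
  have h0 : py * ry = 0 := by rw [hpyz]; ring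
  rw [hMcard, h0] at hcol
  have hr_eq : r = 1 := by
    set ab := A.card * B.card
    set bb := B.card * (A.card + 1)
    set pr2 := p * r
    set q1 := Qf (Fintype.card V - 1)
    omega
  have hpr2 : p * r = p := by rw [hr_eq]; ring
  rw [hpr2] at hcol
  have hryB : ry + 1 = B.card := by
    set ab := A.card * B.card
    set bb := B.card * (A.card + 1)
    set q1 := Qf (Fintype.card V - 1)
    omega
  have hexact : 2 * (A.card * B.card) ≤ E2 G s' + 2 * M.card := by
    rw [hMcard, h0, hpr2]
    set ab := A.card * B.card
    set bb := B.card * (A.card + 1)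
    set q1 := Qf (Fintype.card V - 1)
    omega
  have hadj_exact := E2_col_exact hP M hMsub hMadj hexact
  -- the special vertex β
  have hXBcard : (NX ∩ B).card = 1 := hr_eq
  obtain ⟨β, hβ⟩ := card_eq_one.mp hXBcard
  have hβmem : β ∈ NX ∩ B := hβ ▸ mem_singleton_self β
  have hβB : β ∈ B := (mem_inter.mp hβmem).2
  have hβNX : β ∈ NX := (mem_inter.mp hβmem).1
  have hadjxβ : G.Adj x β := (mem_nb.mp hβNX).2
  -- y's neighborhood is B minus β
  have hNYB : NY = B.erase β := by
    apply eq_of_subset_of_card_le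
    · intro t ht
      have hts' : t ∈ s' := hNYs ht
      have htB : t ∈ B := by
        rcases Finset.mem_union.mp (hABuni ▸ hts') with h | h
        · exact absurd (mem_inter.mpr ⟨ht, h⟩) (by rw [hpy0]; exact notMem_empty t)
        · exact h
      refine mem_erase.mpr ⟨?_, htB⟩
      rintro rfl
      exact Finset.disjoint_left.mp hdisjXY hβNX ht
    · have h1 : (B.erase β).card = B.card - 1 := card_erase_of_mem hβB
      have h2 : NY.card = py + ry := hsplitY
      omega
  have hadjy : ∀ t, G.Adj y t ↔ (t ∈ B ∧ t ≠ β) := by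
    intro t
    constructor
    · intro h
      have : t ∈ NY := mem_nb.mpr ⟨mem_univ t, h⟩
      rw [hNYB, mem_erase] at this
      exact ⟨this.2, this.1⟩
    · rintro ⟨h1, h2⟩
      have : t ∈ NY := by rw [hNYB]; exact mem_erase.mpr ⟨h2, h1⟩
      exact (mem_nb.mp this).2
  set XA := NX ∩ A with hXA
  obtain ⟨α₀, hα₀⟩ := hpx
  have hα₀XA : α₀ ∈ XA := hα₀
  have hα₀A : α₀ ∈ A := (mem_inter.mp hα₀).2
  have hadjx_mem : ∀ t, G.Adj x t ↔ (t ∈ XA ∨ t = β) := by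
    intro t
    constructor
    · intro h
      have htNX : t ∈ NX := mem_nb.mpr ⟨mem_univ t, h⟩
      rcases Finset.mem_union.mp (hABuni ▸ (hNXs htNX)) with h' | h'
      · exact Or.inl (mem_inter.mpr ⟨htNX, h'⟩)
      · right
        have : t ∈ NX ∩ B := mem_inter.mpr ⟨htNX, h'⟩
        rw [hβ, mem_singleton] at this
        exact this
    · rintro (h | h)
      · exact (mem_nb.mp (mem_inter.mp h).1).2
      · exact h ▸ hadjxβ
  have hMmem : ∀ u v : V, (u, v) ∈ M ↔ (u ∈ XA ∧ v = β) := by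
    intro u v
    rw [hM, Finset.mem_union, Finset.mem_product, Finset.mem_product]
    constructor
    · rintro (⟨h1, h2⟩ | ⟨h1, h2⟩)
      · refine ⟨h1, ?_⟩
        rw [hβ, mem_singleton] at h2
        exact h2
      · exact absurd h1 (by rw [hpy0]; exact notMem_empty u)
    · rintro ⟨h1, h2⟩
      exact Or.inl ⟨h1, by rw [hβ, mem_singleton]; exact h2⟩
  have hadjAB : ∀ u ∈ A, ∀ v ∈ B, ¬ (u ∈ XA ∧ v = β) → G.Adj u v := by
    intro u hu v hv h
    apply hadj_exact u (by rw [← hA]; exact hu) v (by rw [← hB]; exact hv)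
    rw [hMmem]
    exact h
  have hA0 : (A \ XA).Nonempty := by
    rw [Finset.sdiff_nonempty]
    intro hsub
    have hXAA : XA = A := Finset.Subset.antisymm inter_subset_right hsub
    have hpc : p = A.card := by rw [hp, hXAA]
    omega
  obtain ⟨α₁, hα₁⟩ := hA0
  have hα₁A : α₁ ∈ A := (mem_sdiff.mp hα₁).1
  have hα₁X : α₁ ∉ XA := (mem_sdiff.mp hα₁).2
  have hB2 : 2 ≤ B.card := by
    by_contra hcon
    have hb1 : B.card = 1 := by
      have : 1 ≤ B.card := card_pos.mpr ⟨β, hβB⟩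
      omega
    have : dIn G univ y = 0 := by omega
    exact no_isolated hTF hnb (le_of_eq hq.symm) y this
  obtain ⟨w₀, hw₀⟩ : (B.erase β).Nonempty := by
    apply card_pos.mp
    rw [card_erase_of_mem hβB]
    omega
  have hw₀B : w₀ ∈ B := (mem_erase.mp hw₀).2
  have hw₀β : w₀ ≠ β := (mem_erase.mp hw₀).1
  have hzone : ∀ t : V, t = x ∨ t = y ∨ t ∈ A ∨ t ∈ B := by
    intro t
    by_cases htx : t = x
    · exact Or.inl htx
    by_cases hty : t = y
    · exact Or.inr (Or.inl hty)
    have : t ∈ s' := mem_erase.mpr ⟨hty, mem_erase.mpr ⟨htx, mem_univ t⟩⟩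
    rcases Finset.mem_union.mp (hABuni ▸ this) with h | h
    · exact Or.inr (Or.inr (Or.inl h))
    · exact Or.inr (Or.inr (Or.inr h))
  refine ⟨β, ?_⟩
  intro u v ruv
  obtain ⟨huv, hnadj', hnoz'⟩ := ruv
  rcases hzone u with hu | hu | hu | hu <;> rcases hzone v with hv | hv | hv | hv
  · exact absurd (hu.trans hv.symm) huv
  · exact Or.inl (by rw [hu, hv])
  · -- u = x, v ∈ A
    exfalso
    by_cases hvXA : v ∈ XA
    · exact hnadj' (hu ▸ (hadjx_mem v).mpr (Or.inl hvXA))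
    · exact hnoz' β ⟨hu ▸ hadjxβ, ((hadjAB v hv β hβB (fun h => hvXA h.1)).symm)⟩
  · -- u = x, v ∈ B
    exfalso
    by_cases hvβ : v = β
    · exact hnadj' (hu ▸ hvβ ▸ hadjxβ)
    · exact hnoz' α₀ ⟨hu ▸ (hadjx_mem α₀).mpr (Or.inl hα₀XA),
        hadjAB α₀ hα₀A v hv (fun h => hvβ h.2)⟩
  · exact Or.inl (by rw [hu, hv]; exact Sym2.eq_swap)
  · exact absurd (hu.trans hv.symm) huv
  · -- u = y, v ∈ A
    exfalso
    exact hnoz' w₀ ⟨hu ▸ (hadjy w₀).mpr ⟨hw₀B, hw₀β⟩,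
      (hadjAB v hv w₀ hw₀B (fun h => hw₀β h.2)).symm⟩
  · -- u = y, v ∈ B
    by_cases hvβ : v = β
    · exact Or.inr (by rw [hu, hvβ])
    · exact absurd (hu ▸ (hadjy v).mpr ⟨hv, hvβ⟩) hnadj'
  · -- u ∈ A, v = x
    exfalso
    by_cases huXA : u ∈ XA
    · exact hnadj' (hv ▸ ((hadjx_mem u).mpr (Or.inl huXA)).symm)
    · exact hnoz' β ⟨hadjAB u hu β hβB (fun h => huXA h.1), hv ▸ hadjxβ.symm⟩
  · -- u ∈ A, v = y
    exfalso
    exact hnoz' w₀ ⟨hadjAB u hu w₀ hw₀B (fun h => hw₀β h.2),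
      hv ▸ ((hadjy w₀).mpr ⟨hw₀B, hw₀β⟩).symm⟩
  · -- u ∈ A, v ∈ A
    exfalso
    exact hnoz' w₀ ⟨hadjAB u hu w₀ hw₀B (fun h => hw₀β h.2),
      (hadjAB v hv w₀ hw₀B (fun h => hw₀β h.2)).symm⟩
  · -- u ∈ A, v ∈ B
    exfalso
    by_cases h : u ∈ XA ∧ v = β
    · exact hnoz' x ⟨((hadjx_mem u).mpr (Or.inl h.1)).symm, h.2 ▸ hadjxβ⟩
    · exact hnadj' (hadjAB u hu v hv h)
  · -- u ∈ B, v = x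
    exfalso
    by_cases huβ : u = β
    · exact hnadj' (hv ▸ huβ ▸ hadjxβ.symm)
    · exact hnoz' α₀ ⟨(hadjAB α₀ hα₀A u hu (fun h => huβ h.2)).symm,
        hv ▸ ((hadjx_mem α₀).mpr (Or.inl hα₀XA)).symm⟩
  · -- u ∈ B, v = y
    by_cases huβ : u = β
    · exact Or.inr (by rw [hv, huβ]; exact Sym2.eq_swap)
    · exact absurd (hv ▸ ((hadjy u).mpr ⟨hu, huβ⟩).symm) hnadj'
  · -- u ∈ B, v ∈ A
    exfalso
    by_cases h : v ∈ XA ∧ u = β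
    · exact hnoz' x ⟨h.2 ▸ hadjxβ.symm, (hadjx_mem v).mpr (Or.inl h.1)⟩
    · exact hnadj' ((hadjAB v hv u hu (fun h' => h ⟨h'.1, h'.2⟩)).symm)
  · -- u ∈ B, v ∈ B
    exfalso
    by_cases huβ : u = β
    · have hvβ : v ≠ β := fun h => huv (huβ.trans h.symm)
      exact hnoz' α₁ ⟨huβ ▸ (hadjAB α₁ hα₁A β hβB (fun h => hα₁X h.1)).symm,
        hadjAB α₁ hα₁A v hv (fun h => hα₁X h.1)⟩
    · by_cases hvβ : v = β
      · exact hnoz' α₁ ⟨(hadjAB α₁ hα₁A u hu (fun h => hα₁X h.1)).symm,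
          hvβ ▸ hadjAB α₁ hα₁A β hβB (fun h => hα₁X h.1)⟩
      · exact hnoz' y ⟨((hadjy u).mpr ⟨hu, huβ⟩).symm, (hadjy v).mpr ⟨hv, hvβ⟩⟩

lemma colA_compl (s : Finset V) (P : Set V) : colA s {w | w ∉ P} = colB s P := by
  ext u
  simp only [mem_colA, mem_colB, Set.mem_setOf_eq]

lemma colB_compl (s : Finset V) (P : Set V) : colB s {w | w ∉ P} = colA s P := by
  ext u
  simp only [mem_colA, mem_colB, Set.mem_setOf_eq]
  tauto

/-- both endpoints seeing both sides is impossible -/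
lemma caseII_imposs (hTF : G.CliqueFree 3) (hnb : ¬ BipOn G (univ : Finset V))
    (hq : E2 G univ = 2 * Qf (Fintype.card V - 1))
    {x y : V} (rxy : Rem G x y) {P : Set V}
    (hP : PCol G (((univ : Finset V).erase x).erase y) P)
    (hpx : (nb G univ x ∩ colA (((univ : Finset V).erase x).erase y) P).Nonempty)
    (hrx : (nb G univ x ∩ colB (((univ : Finset V).erase x).erase y) P).Nonempty)
    (hpy : (nb G univ y ∩ colA (((univ : Finset V).erase x).erase y) P).Nonempty)
    (hry : (nb G univ y ∩ colB (((univ : Finset V).erase x).erase y) P).Nonempty) : False := by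
  classical
  have hds := deg_sum_le hTF hnb rxy
  obtain ⟨hxy, hnadj, hnoz⟩ := rxy
  have hc5 : 5 ≤ Fintype.card V := by
    have := nonbip_card5 hTF hnb
    rwa [card_univ] at this
  set s' := ((univ : Finset V).erase x).erase y with hs'
  set A := colA s' P with hA
  set B := colB s' P with hB
  set NX := nb G univ x with hNX
  set NY := nb G univ y with hNY
  have hcard' : s'.card = Fintype.card V - 2 := by
    rw [hs', card_erase_of_mem (mem_erase.mpr ⟨hxy.symm, mem_univ y⟩),
      card_erase_of_mem (mem_univ x), card_univ]
    omega
  have hNXs : NX ⊆ s' := by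
    intro z hz
    obtain ⟨_, hadj⟩ := mem_nb.mp hz
    exact mem_erase.mpr ⟨fun hzy => hnadj (hzy ▸ hadj), mem_erase.mpr ⟨hadj.ne', mem_univ z⟩⟩
  have hNYs : NY ⊆ s' := by
    intro z hz
    obtain ⟨_, hadj⟩ := mem_nb.mp hz
    exact mem_erase.mpr ⟨hadj.ne',
      mem_erase.mpr ⟨fun hzx => hnadj (hzx ▸ hadj).symm, mem_univ z⟩⟩
  have hdisjXY : Disjoint NX NY := by
    rw [hNX, hNY, Finset.disjoint_left]
    intro z hz hz'
    exact hnoz z ⟨(mem_nb.mp hz).2, (mem_nb.mp hz').2.symm⟩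
  have hABuni : A ∪ B = s' := colA_union_colB s' P
  set M := (NX ∩ A) ×ˢ (NX ∩ B) ∪ (NY ∩ A) ×ˢ (NY ∩ B) with hM
  have hMsub : M ⊆ A ×ˢ B :=
    union_subset (product_subset_product inter_subset_right inter_subset_right)
      (product_subset_product inter_subset_right inter_subset_right)
  have hMadj : ∀ q ∈ M, ¬ G.Adj q.1 q.2 := by
    intro q hq' hadj
    rcases Finset.mem_union.mp hq' with h | h
    · rw [Finset.mem_product] at h
      exact tri_free hTF x q.1 q.2 (mem_nb.mp (mem_inter.mp h.1).1).2
        (mem_nb.mp (mem_inter.mp h.2).1).2 hadj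
    · rw [Finset.mem_product] at h
      exact tri_free hTF y q.1 q.2 (mem_nb.mp (mem_inter.mp h.1).1).2
        (mem_nb.mp (mem_inter.mp h.2).1).2 hadj
  have hMdisj : Disjoint ((NX ∩ A) ×ˢ (NX ∩ B)) ((NY ∩ A) ×ˢ (NY ∩ B)) := by
    rw [Finset.disjoint_left]
    intro q hq' hq''
    rw [Finset.mem_product] at hq' hq''
    exact Finset.disjoint_left.mp hdisjXY (mem_inter.mp hq'.1).1 (mem_inter.mp hq''.1).1
  have hMcard : M.card = (NX ∩ A).card * (NX ∩ B).card + (NY ∩ A).card * (NY ∩ B).card := by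
    rw [hM, card_union_of_disjoint hMdisj, card_product, card_product]
  set p := (NX ∩ A).card with hp
  set r := (NX ∩ B).card with hr
  set py := (NY ∩ A).card with hpy'
  set ry := (NY ∩ B).card with hry'
  have hp1 : 1 ≤ p := card_pos.mpr hpx
  have hr1 : 1 ≤ r := card_pos.mpr hrx
  have hpy1 : 1 ≤ py := card_pos.mpr hpy
  have hry1 : 1 ≤ ry := card_pos.mpr hry
  have hsplitX : dIn G univ x = p + r := by
    rw [dIn, hp, hr, ← card_union_of_disjoint
      ((colA_disj_colB s' P).mono inter_subset_right inter_subset_right)]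
    congr 1
    rw [← Finset.inter_union_distrib_left, hABuni, Finset.inter_eq_left.mpr hNXs]
  have hsplitY : dIn G univ y = py + ry := by
    rw [dIn, hpy', hry', ← card_union_of_disjoint
      ((colA_disj_colB s' P).mono inter_subset_right inter_subset_right)]
    congr 1
    rw [← Finset.inter_union_distrib_left, hABuni, Finset.inter_eq_left.mpr hNYs]
  have hcol := E2_col hP M hMsub hMadj
  have hE2 : E2 G univ = E2 G s' + 2 * dIn G univ x + 2 * dIn G univ y :=
    E2_erase2 (mem_univ x) (mem_univ y) hxy hnadj
  have hABcard : A.card + B.card = s'.card := colA_card_add_colB_card s' P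
  have hprb := pr_bound hp1 hr1
  have hprb2 := pr_bound hpy1 hry1
  have hQ2 : A.card * B.card ≤ Qf (Fintype.card V - 2) := by
    have h := Qf_ab A.card B.card
    have he : A.card + B.card = Fintype.card V - 2 := by omega
    rwa [he] at h
  obtain ⟨k, hk⟩ : ∃ k, Fintype.card V = k + 7 := by
    refine ⟨Fintype.card V - 7, ?_⟩
    omega
  have hstep := Qf_step (k + 5)
  have e1 : Fintype.card V - 2 = k + 5 := by omega
  have e2 : Fintype.card V - 1 = k + 6 := by omega
  have e3 : k + 5 + 1 = k + 6 := by omega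
  rw [e3] at hstep
  rw [e1] at hQ2
  rw [e2] at hq
  rw [hMcard] at hcol
  set ab := A.card * B.card
  set pr2 := p * r
  set pr3 := py * ry
  set q1 := Qf (k + 6)
  set q2 := Qf (k + 5)
  omega

/-- Main endgame: at most two remote pairs -/
lemma ncard_le_two (hTF : G.CliqueFree 3) (hnb : ¬ BipOn G (univ : Finset V))
    (hq0 : 2 * Qf (Fintype.card V - 1) ≤ E2 G univ) :
    {e : Sym2 V | ∃ x y : V, e = s(x, y) ∧ Rem G x y}.ncard ≤ 2 := by
  classical
  by_contra hcon
  push_neg at hcon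
  obtain ⟨e1, he1, e2, he2, e3, he3, h12, h13, h23⟩ :=
    (Set.two_lt_ncard (Set.toFinite _)).mp hcon
  obtain ⟨x1, y1, rfl, r1⟩ := he1
  obtain ⟨x2, y2, rfl, r2⟩ := he2
  obtain ⟨x3, y3, rfl, r3⟩ := he3
  have hq : E2 G univ = 2 * Qf (Fintype.card V - 1) := by
    have h := thmB hTF hnb (mem_univ x1) (mem_univ y1) r1.1 r1.2.1 (fun z _ => r1.2.2 z)
    rw [card_univ] at h
    omega
  have pigeon : ∀ E F : Sym2 V,
      (∀ u v : V, Rem G u v → s(u, v) = E ∨ s(u, v) = F) → False := by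
    intro E F hbound
    have h1 := hbound x1 y1 r1
    have h2 := hbound x2 y2 r2
    have h3 := hbound x3 y3 r3
    rcases h1 with h1 | h1 <;> rcases h2 with h2 | h2 <;> rcases h3 with h3 | h3 <;>
      first
        | exact h12 (h1.trans h2.symm)
        | exact h13 (h1.trans h3.symm)
        | exact h23 (h2.trans h3.symm)
  -- dispatcher: any remote pair with bipartite remainder leads to contradiction
  have hCII : ∀ a b : V, Rem G a b → ¬ BipOn G (((univ : Finset V).erase a).erase b) := by
    have core : ∀ a b : V, Rem G a b → ∀ P : Set V,
        PCol G (((univ : Finset V).erase a).erase b) P →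
        (nb G univ a ∩ colA (((univ : Finset V).erase a).erase b) P).Nonempty →
        (nb G univ a ∩ colB (((univ : Finset V).erase a).erase b) P).Nonempty → False := by
      intro a b rab P hP hpa hra
      by_cases hb1 : nb G univ b ∩ colA (((univ : Finset V).erase a).erase b) P = ∅
      · obtain ⟨β, hβ⟩ := caseII hTF hnb hq rab hP hpa hra hb1
        exact pigeon _ _ hβ
      · by_cases hb2 : nb G univ b ∩ colB (((univ : Finset V).erase a).erase b) P = ∅
        · have hP' := PCol_compl hP
          have h1 : (nb G univ a ∩
              colA (((univ : Finset V).erase a).erase b) {w | w ∉ P}).Nonempty := by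
            rwa [colA_compl]
          have h2 : (nb G univ a ∩
              colB (((univ : Finset V).erase a).erase b) {w | w ∉ P}).Nonempty := by
            rwa [colB_compl]
          have h3 : nb G univ b ∩
              colA (((univ : Finset V).erase a).erase b) {w | w ∉ P} = ∅ := by
            rwa [colA_compl]
          obtain ⟨β, hβ⟩ := caseII hTF hnb hq rab hP' h1 h2 h3
          exact pigeon _ _ hβ
        · exact caseII_imposs hTF hnb hq rab hP hpa hra
            (nonempty_iff_ne_empty.mpr hb1) (nonempty_iff_ne_empty.mpr hb2)
    intro a b rab hbp
    obtain ⟨P, hP⟩ := hbp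
    rcases extend2 hnb (mem_univ a) (mem_univ b) rab.1 rab.2.1 hP with hX | hY
    · obtain ⟨c, hc, d, hd, hac, had, hcP, hdP⟩ := hX
      exact core a b rab P hP
        ⟨c, mem_inter.mpr ⟨mem_nb.mpr ⟨mem_univ c, hac⟩, mem_colA.mpr ⟨hc, hcP⟩⟩⟩
        ⟨d, mem_inter.mpr ⟨mem_nb.mpr ⟨mem_univ d, had⟩, mem_colB.mpr ⟨hd, hdP⟩⟩⟩
    · obtain ⟨c, hc, d, hd, hac, had, hcP, hdP⟩ := hY
      have hcomm : ((univ : Finset V).erase a).erase b = ((univ : Finset V).erase b).erase a := by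
        ext w; simp only [mem_erase]; tauto
      have hP' : PCol G (((univ : Finset V).erase b).erase a) P := by rwa [hcomm] at hP
      rw [hcomm] at hc hd
      exact core b a rab.symm' P hP'
        ⟨c, mem_inter.mpr ⟨mem_nb.mpr ⟨mem_univ c, hac⟩, mem_colA.mpr ⟨hc, hcP⟩⟩⟩
        ⟨d, mem_inter.mpr ⟨mem_nb.mpr ⟨mem_univ d, had⟩, mem_colB.mpr ⟨hd, hdP⟩⟩⟩
  -- caseI facts available for every remote pair
  have hfacts : ∀ a b : V, Rem G a b →
      (dIn G univ a + dIn G univ b + 3 = Fintype.card V) ∧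
      (∀ u v : V, u ≠ v → ¬ G.Adj u v → (∀ z : V, ¬ (G.Adj u z ∧ G.Adj z v)) →
        u = a ∨ u = b ∨ v = a ∨ v = b) :=
    fun a b rab => caseI_facts hTF hnb hq rab.1 rab.2.1 rab.2.2 (hCII a b rab)
  -- normalize e2 and e3 to have an endpoint in {x1, y1}
  have meet1 := (hfacts x1 y1 r1).2
  have hnorm : ∀ a b : V, Rem G a b → ∃ c d : V, s(a, b) = s(c, d) ∧ Rem G c d ∧
      (c = x1 ∨ c = y1) := by
    intro a b rab
    rcases meet1 a b rab.1 rab.2.1 rab.2.2 with h | h | h | h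
    · exact ⟨a, b, rfl, rab, Or.inl h⟩
    · exact ⟨a, b, rfl, rab, Or.inr h⟩
    · exact ⟨b, a, Sym2.eq_swap, rab.symm', Or.inl h⟩
    · exact ⟨b, a, Sym2.eq_swap, rab.symm', Or.inr h⟩
  obtain ⟨c2, d2, he2eq, r2', hc2⟩ := hnorm x2 y2 r2
  obtain ⟨c3, d3, he3eq, r3', hc3⟩ := hnorm x3 y3 r3
  rw [he2eq] at h12 h23
  rw [he3eq] at h13 h23
  clear he2eq he3eq r2 r3 meet1
  rcases hc2 with rfl | rfl <;> rcases hc3 with rfl | rfl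
  · -- star at c2 = c3 = x1
    have hd2y : y1 ≠ d2 := fun h => h12 (by rw [h])
    have hd3y : y1 ≠ d3 := fun h => h13 (by rw [h])
    have hd23 : d2 ≠ d3 := fun h => h23 (by rw [h])
    exact no_star_config hTF hnb hq r1 r2' r3' hd2y hd3y hd23
      (hfacts _ _ r1).1 (hfacts _ _ r2').1 (hfacts _ _ r3').1
      (hfacts _ _ r1).2 (hfacts _ _ r2').2 (hfacts _ _ r3').2
  · -- c2 = x1, c3 = y1 : triangle
    rcases (hfacts _ _ r2').2 c3 d3 r3'.1 r3'.2.1 r3'.2.2 with h | h | h | h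
    · exact r1.1 h.symm
    · exact h12 (by rw [h])
    · exact h13 (by rw [h, Sym2.eq_swap])
    · subst h
      exact no_triangle_config hTF hnb hq r1 r2' r3' (hfacts _ _ r1).1
  · -- c2 = y1, c3 = x1 : triangle
    rcases (hfacts _ _ r3').2 c2 d2 r2'.1 r2'.2.1 r2'.2.2 with h | h | h | h
    · exact r1.1 h.symm
    · exact h13 (by rw [h])
    · exact h12 (by rw [h, Sym2.eq_swap])
    · subst h
      exact no_triangle_config hTF hnb hq r1 r3' r2' (hfacts _ _ r1).1
  · -- star at y1
    have hd2x : x1 ≠ d2 := fun h => h12 (by rw [h, Sym2.eq_swap])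
    have hd3x : x1 ≠ d3 := fun h => h13 (by rw [h, Sym2.eq_swap])
    have hd23 : d2 ≠ d3 := fun h => h23 (by rw [h])
    exact no_star_config hTF hnb hq r1.symm' r2' r3' hd2x hd3x hd23
      (hfacts _ _ r1.symm').1 (hfacts _ _ r2').1 (hfacts _ _ r3').1
      (hfacts _ _ r1.symm').2 (hfacts _ _ r2').2 (hfacts _ _ r3').2

end TFS













/-- Structure of triangle-free graphs with at least ((n-1)^2)/4 edges. -/
theorem trianglefree_structure {V : Type*} [Fintype V] [DecidableEq V] (n : ℕ)
    (hn : Fintype.card V = n) (G : SimpleGraph V) [DecidableRel G.Adj]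
    (hTF : G.CliqueFree 3) (hE : (n - 1) ^ 2 / 4 ≤ G.edgeFinset.card) :
    (∃ P : Set V, (∀ x y : V, G.Adj x y → (x ∈ P ↔ y ∉ P)) ∧
      ((n - 1) ^ 2 / 4 < G.edgeFinset.card →
        ∀ x y : V, ((x ∈ P ∧ y ∈ P) ∨ (x ∉ P ∧ y ∉ P)) → ¬ Remote G x y)) ∨
    ((¬ ∃ P : Set V, ∀ x y : V, G.Adj x y → (x ∈ P ↔ y ∉ P)) ∧
      {s : Sym2 V | ∃ x y : V, s = s(x, y) ∧ Remote G x y}.ncard ≤ 2 ∧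
      ((n - 1) ^ 2 / 4 < G.edgeFinset.card → ∀ x y : V, ¬ Remote G x y)) := by
  classical
  subst hn
  have hE2u := TFS.E2_univ_eq G
  by_cases hbip : TFS.BipOn G (Finset.univ : Finset V)
  · left
    obtain ⟨P, hP⟩ := hbip
    refine ⟨P, fun x y hadj => hP x (Finset.mem_univ x) y (Finset.mem_univ y) hadj, ?_⟩
    intro hstrict x y hside hrem
    obtain ⟨hxy, hnadj, hnoz⟩ := hrem
    have hb : TFS.E2 G Finset.univ ≤ 2 * TFS.Qf (Fintype.card V - 1) := by
      rcases hside with ⟨hx, hy⟩ | ⟨hx, hy⟩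
      · exact TFS.bip_remote_bound hP hx hy hxy hnadj hnoz
      · exact TFS.bip_remote_bound (TFS.PCol_compl hP) hx hy hxy hnadj hnoz
    rw [hE2u] at hb
    unfold TFS.Qf at hb
    set m := (Fintype.card V - 1)^2 with hm
    omega
  · right
    have hQle : 2 * TFS.Qf (Fintype.card V - 1) ≤ TFS.E2 G Finset.univ := by
      rw [hE2u]
      unfold TFS.Qf
      omega
    refine ⟨?_, ?_, ?_⟩
    · rintro ⟨P, hP⟩
      exact hbip ⟨P, fun a _ b _ hab => hP a b hab⟩
    · exact TFS.ncard_le_two hTF hbip hQle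
    · intro hstrict x y hrem
      obtain ⟨hxy, hnadj, hnoz⟩ := hrem
      have h := TFS.thmB hTF hbip (Finset.mem_univ x) (Finset.mem_univ y) hxy hnadj
        (fun z _ => hnoz z)
      rw [Finset.card_univ] at h
      rw [hE2u] at h
      unfold TFS.Qf at h
      set m := (Fintype.card V - 1)^2 with hm
      omega
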